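/- arXiv:1809.09079 — 6 statements merged into one kernel-verified Lean document; each statement's English description precedes it below -/
import Mathlib

section
/- If S : [0,T] → ℂ is a continuous function of bounded variation, V : [0,T] → ℂ is continuous, S(0) = 0, and S(t) = ∫₀ᵗ S(r) dV(r) (Riemann–Stieltjes integral) for all t ∈ [0,T], then S is identically zero on [0,T]. -/
open Set Filter

/-- A tagged partition of the interval `[a, b]`. -/
structure TaggedPartition (a b : ℝ) where
  n : ℕ
  pts : ℕ → ℝ
  tag : ℕ → ℝ
  mono : ∀ i, i < n → pts i ≤ pts (i + 1)
  first : pts 0 = a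
  last : pts n = b
  tag_mem : ∀ i, i < n → tag i ∈ Set.Icc (pts i) (pts (i + 1))

/-- The Riemann–Stieltjes sum of `M` against `N` along a tagged partition. -/
noncomputable def riemannSum (M N : ℝ → ℂ) {a b : ℝ} (P : TaggedPartition a b) : ℂ :=
  ∑ i ∈ Finset.range P.n, M (P.tag i) * (N (P.pts (i + 1)) - N (P.pts i))

/-- `I` is the Riemann–Stieltjes integral `∫ₐᵇ M dN`: Riemann–Stieltjes sums converge
to `I` as the mesh of the tagged partition tends to `0`. -/
def IsRSIntegral (M N : ℝ → ℂ) (a b : ℝ) (I : ℂ) : Prop :=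
  ∀ ε > 0, ∃ δ > 0, ∀ P : TaggedPartition a b,
    (∀ i, i < P.n → P.pts (i + 1) - P.pts i ≤ δ) → ‖riemannSum M N P - I‖ < ε

namespace Stmt0Aux

noncomputable def qpts (u : ℝ) (k : ℕ) (i : ℕ) : ℝ := (min i k : ℕ) * u / k

lemma qpts_zero (u : ℝ) (k : ℕ) : qpts u k 0 = 0 := by simp [qpts]

lemma qpts_of_le (u : ℝ) {k i : ℕ} (h : i ≤ k) : qpts u k i = (i : ℝ) * u / k := by
  simp [qpts, Nat.min_eq_left h]

lemma qpts_of_ge (u : ℝ) {k i : ℕ} (hk : 0 < k) (h : k ≤ i) : qpts u k i = u := by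
  rw [qpts, Nat.min_eq_right h]
  field_simp

lemma qpts_last (u : ℝ) {k : ℕ} (hk : 0 < k) : qpts u k k = u := qpts_of_ge u hk le_rfl

lemma qpts_mono {u : ℝ} (hu : 0 ≤ u) (k : ℕ) : Monotone (qpts u k) := by
  intro i j hij
  unfold qpts
  have h1 : ((min i k : ℕ) : ℝ) ≤ ((min j k : ℕ) : ℝ) := by
    have : min i k ≤ min j k := by omega
    exact_mod_cast this
  have hk0 : (0:ℝ) ≤ (k:ℝ) := Nat.cast_nonneg k
  gcongr

lemma qpts_step {u : ℝ} (hu : 0 ≤ u) {k : ℕ} (hk : 0 < k) (i : ℕ) :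
    qpts u k (i + 1) - qpts u k i ≤ u / k := by
  unfold qpts
  have h1 : (min (i+1) k : ℕ) ≤ min i k + 1 := by omega
  have h2 : ((min (i+1) k : ℕ) : ℝ) ≤ ((min i k : ℕ) : ℝ) + 1 := by exact_mod_cast h1
  have hk' : (0:ℝ) < k := by exact_mod_cast hk
  rw [div_sub_div_same]
  gcongr
  nlinarith

lemma qpts_mem {u : ℝ} (hu : 0 ≤ u) {k : ℕ} (hk : 0 < k) (i : ℕ) :
    qpts u k i ∈ Icc 0 u := by
  constructor
  · unfold qpts; positivity
  · calc qpts u k i ≤ qpts u k (max i k) := qpts_mono hu k (le_max_left _ _)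
      _ = u := qpts_of_ge u hk (le_max_right _ _)

noncomputable def ppts (u v : ℝ) (k₁ k₂ : ℕ) (i : ℕ) : ℝ :=
  qpts u k₁ i + qpts (v - u) k₂ (i - k₁)

lemma ppts_mono {u v : ℝ} (hu : 0 ≤ u) (huv : u ≤ v) (k₁ k₂ : ℕ) :
    Monotone (ppts u v k₁ k₂) := by
  intro i j hij
  exact add_le_add (qpts_mono hu k₁ hij)
    (qpts_mono (by linarith) k₂ (Nat.sub_le_sub_right hij k₁))

lemma ppts_zero (u v : ℝ) (k₁ k₂ : ℕ) : ppts u v k₁ k₂ 0 = 0 := by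
  simp [ppts, qpts_zero]

lemma ppts_last {u v : ℝ} {k₁ k₂ : ℕ} (h₁ : 0 < k₁) (h₂ : 0 < k₂) :
    ppts u v k₁ k₂ (k₁ + k₂) = v := by
  rw [ppts, qpts_of_ge u h₁ (Nat.le_add_right _ _), Nat.add_sub_cancel_left,
    qpts_last _ h₂]
  ring

lemma ppts_of_le (u v : ℝ) {k₁ k₂ i : ℕ} (h : i ≤ k₁) :
    ppts u v k₁ k₂ i = qpts u k₁ i := by
  rw [ppts, Nat.sub_eq_zero_of_le h, qpts_zero, add_zero]

lemma ppts_of_ge (u v : ℝ) {k₁ k₂ : ℕ} (h₁ : 0 < k₁) (j : ℕ) :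
    ppts u v k₁ k₂ (k₁ + j) = u + qpts (v - u) k₂ j := by
  rw [ppts, qpts_of_ge u h₁ (Nat.le_add_right _ _), Nat.add_sub_cancel_left]

lemma ppts_step {u v δ : ℝ} (hu : 0 ≤ u) (huv : u ≤ v) {k₁ k₂ : ℕ}
    (h₁ : 0 < k₁) (h₂ : 0 < k₂) (hd₁ : u / k₁ ≤ δ) (hd₂ : (v - u) / k₂ ≤ δ) (i : ℕ) :
    ppts u v k₁ k₂ (i + 1) - ppts u v k₁ k₂ i ≤ δ := by
  rcases lt_or_ge i k₁ with h | h
  · rw [ppts_of_le u v (by omega), ppts_of_le u v (by omega)]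
    exact (qpts_step hu h₁ i).trans hd₁
  · obtain ⟨j, rfl⟩ := Nat.exists_eq_add_of_le h
    rw [show k₁ + j + 1 = k₁ + (j+1) by ring, ppts_of_ge u v h₁, ppts_of_ge u v h₁]
    have := qpts_step (by linarith : (0:ℝ) ≤ v - u) h₂ j
    linarith

/-- uniform tagged partition of `[0,u]`, tags at left endpoints -/
noncomputable def QP (u : ℝ) (hu : 0 ≤ u) (k : ℕ) (hk : 0 < k) : TaggedPartition 0 u where
  n := k
  pts := qpts u k
  tag := qpts u k
  mono := fun i _ => qpts_mono hu k (Nat.le_succ i)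
  first := qpts_zero u k
  last := qpts_last u hk
  tag_mem := fun i _ => ⟨le_rfl, qpts_mono hu k (Nat.le_succ i)⟩

/-- concatenated tagged partition of `[0,v]` -/
noncomputable def PP (u v : ℝ) (hu : 0 ≤ u) (huv : u ≤ v) (k₁ k₂ : ℕ)
    (h₁ : 0 < k₁) (h₂ : 0 < k₂) : TaggedPartition 0 v where
  n := k₁ + k₂
  pts := ppts u v k₁ k₂
  tag := ppts u v k₁ k₂
  mono := fun i _ => ppts_mono hu huv k₁ k₂ (Nat.le_succ i)
  first := ppts_zero _ _ _ _
  last := ppts_last h₁ h₂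
  tag_mem := fun i _ => ⟨le_rfl, ppts_mono hu huv k₁ k₂ (Nat.le_succ i)⟩

lemma rs_split (S V : ℝ → ℂ) {u v : ℝ} (hu : 0 ≤ u) (huv : u ≤ v) {k₁ k₂ : ℕ}
    (h₁ : 0 < k₁) (h₂ : 0 < k₂) :
    riemannSum S V (PP u v hu huv k₁ k₂ h₁ h₂) =
      riemannSum S V (QP u hu k₁ h₁) +
      ∑ i ∈ Finset.range k₂, S (u + qpts (v-u) k₂ i) *
        (V (u + qpts (v-u) k₂ (i+1)) - V (u + qpts (v-u) k₂ i)) := by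
  unfold riemannSum QP PP
  simp only
  rw [Finset.sum_range_add]
  congr 1
  · apply Finset.sum_congr rfl
    intro i hi
    rw [Finset.mem_range] at hi
    rw [ppts_of_le u v (by omega), ppts_of_le u v (by omega)]
  · apply Finset.sum_congr rfl
    intro i hi
    rw [show k₁ + i + 1 = k₁ + (i+1) by ring, ppts_of_ge u v h₁, ppts_of_ge u v h₁]

lemma abel_identity (S V : ℝ → ℂ) (y : ℕ → ℝ) (k : ℕ) :
    ∑ i ∈ Finset.range k, S (y i) * (V (y (i+1)) - V (y i))
      = S (y k) * (V (y k) - V (y 0))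
        - ∑ i ∈ Finset.range k, (S (y (i+1)) - S (y i)) * (V (y (i+1)) - V (y 0)) := by
  rw [eq_sub_iff_add_eq, ← Finset.sum_add_distrib]
  have h := Finset.sum_range_sub (fun i => S (y i) * (V (y i) - V (y 0))) k
  calc ∑ i ∈ Finset.range k, (S (y i) * (V (y (i+1)) - V (y i)) +
        (S (y (i+1)) - S (y i)) * (V (y (i+1)) - V (y 0)))
      = ∑ i ∈ Finset.range k, ((fun i => S (y i) * (V (y i) - V (y 0))) (i+1) -
          (fun i => S (y i) * (V (y i) - V (y 0))) i) := by
        apply Finset.sum_congr rfl; intro i _; simp only; ring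
    _ = S (y k) * (V (y k) - V (y 0)) - S (y 0) * (V (y 0) - V (y 0)) := h
    _ = S (y k) * (V (y k) - V (y 0)) := by simp

end Stmt0Aux

namespace Stmt0Aux

lemma div_nat_le {x δ : ℝ} (hx : 0 ≤ x) (hδ : 0 < δ) :
    x / ((max 1 ⌈x/δ⌉₊ : ℕ) : ℝ) ≤ δ := by
  set k : ℕ := max 1 ⌈x/δ⌉₊ with hk
  have hkpos : (0:ℝ) < (k:ℝ) := by
    have : 0 < k := lt_of_lt_of_le one_pos (le_max_left _ _)
    exact_mod_cast this
  rw [div_le_iff₀ hkpos]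
  have h1 : x/δ ≤ (k:ℝ) := by
    refine (Nat.le_ceil _).trans ?_
    exact_mod_cast le_max_right 1 ⌈x/δ⌉₊
  calc x = (x/δ)*δ := by field_simp
    _ ≤ (k:ℝ)*δ := mul_le_mul_of_nonneg_right h1 hδ.le
    _ = δ*(k:ℝ) := mul_comm _ _

lemma keyA (T : ℝ) (S V : ℝ → ℂ)
    (heq : ∀ t ∈ Icc (0:ℝ) T, IsRSIntegral S V 0 t (S t))
    {u v : ℝ} (hu : 0 ≤ u) (huv : u ≤ v) (hvT : v ≤ T)
    {e w : ℝ} (he : ∀ x ∈ Icc u v, ‖V x - V u‖ ≤ e)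
    (hw : ∀ (k : ℕ) (x : ℕ → ℝ), Monotone x → (∀ i, x i ∈ Icc u v) →
      ∑ i ∈ Finset.range k, ‖S (x (i+1)) - S (x i)‖ ≤ w) :
    ‖S v - S u - S v * (V v - V u)‖ ≤ e * w := by
  have he0 : 0 ≤ e := le_trans (norm_nonneg _) (he u ⟨le_rfl, huv⟩)
  refine le_of_forall_pos_le_add ?_
  intro ε hε
  obtain ⟨δ₁, hδ₁, H₁⟩ := heq u ⟨hu, huv.trans hvT⟩ (ε/2) (by linarith)
  obtain ⟨δ₂, hδ₂, H₂⟩ := heq v ⟨hu.trans huv, hvT⟩ (ε/2) (by linarith)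
  set δ := min δ₁ δ₂ with hδdef
  have hδ : 0 < δ := lt_min hδ₁ hδ₂
  set k₁ : ℕ := max 1 ⌈u/δ⌉₊ with hk₁def
  set k₂ : ℕ := max 1 ⌈(v-u)/δ⌉₊ with hk₂def
  have hk₁ : 0 < k₁ := lt_of_lt_of_le one_pos (le_max_left _ _)
  have hk₂ : 0 < k₂ := lt_of_lt_of_le one_pos (le_max_left _ _)
  have hm₁ : u / (k₁:ℝ) ≤ δ := div_nat_le hu hδ
  have hm₂ : (v-u) / (k₂:ℝ) ≤ δ := div_nat_le (by linarith) hδ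
  set y : ℕ → ℝ := fun i => u + qpts (v-u) k₂ i with hy
  have hymono : Monotone y := fun i j hij =>
    add_le_add_right (qpts_mono (by linarith) k₂ hij) u
  have hymem : ∀ i, y i ∈ Icc u v := by
    intro i
    obtain ⟨h1, h2⟩ := qpts_mem (by linarith : (0:ℝ) ≤ v - u) hk₂ i
    simp only [hy]
    constructor <;> linarith
  have hyk : y k₂ = v := by rw [hy]; simp only; rw [qpts_last _ hk₂]; ring
  have hy0 : y 0 = u := by rw [hy]; simp only [qpts_zero, add_zero]
  -- apply convergence hypotheses
  have hQ := H₁ (QP u hu k₁ hk₁) (fun i _ => (qpts_step hu hk₁ i).trans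
    (hm₁.trans (min_le_left _ _)))
  have hP := H₂ (PP u v hu huv k₁ k₂ hk₁ hk₂) (fun i _ =>
    (ppts_step hu huv hk₁ hk₂ hm₁ hm₂ i).trans (min_le_right _ _))
  rw [rs_split S V hu huv hk₁ hk₂] at hP
  set A := riemannSum S V (QP u hu k₁ hk₁) with hA
  set B := ∑ i ∈ Finset.range k₂, S (u + qpts (v-u) k₂ i) *
      (V (u + qpts (v-u) k₂ (i+1)) - V (u + qpts (v-u) k₂ i)) with hB
  have hBy : B = ∑ i ∈ Finset.range k₂, S (y i) * (V (y (i+1)) - V (y i)) := rfl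
  have habel := abel_identity S V y k₂
  rw [hyk, hy0] at habel
  -- remainder bound
  set R := ∑ i ∈ Finset.range k₂, (S (y (i+1)) - S (y i)) * (V (y (i+1)) - V u) with hR
  have hRem : ‖R‖ ≤ e * w := by
    calc ‖R‖ ≤ ∑ i ∈ Finset.range k₂, ‖(S (y (i+1)) - S (y i)) * (V (y (i+1)) - V u)‖ :=
          norm_sum_le _ _
      _ ≤ ∑ i ∈ Finset.range k₂, ‖S (y (i+1)) - S (y i)‖ * e := by
          apply Finset.sum_le_sum
          intro i _
          rw [norm_mul]
          exact mul_le_mul_of_nonneg_left (he _ (hymem (i+1))) (norm_nonneg _)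
      _ = (∑ i ∈ Finset.range k₂, ‖S (y (i+1)) - S (y i)‖) * e := by
          rw [Finset.sum_mul]
      _ ≤ w * e := mul_le_mul_of_nonneg_right (hw k₂ y hymono hymem) he0
      _ = e * w := mul_comm _ _
  -- combine
  have h3 : ‖B - (S v - S u)‖ < ε := by
    have : B - (S v - S u) = (A + B - S v) - (A - S u) := by ring
    rw [this]
    calc ‖(A + B - S v) - (A - S u)‖ ≤ ‖A + B - S v‖ + ‖A - S u‖ := norm_sub_le _ _
      _ < ε/2 + ε/2 := add_lt_add hP hQ
      _ = ε := by ring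
  have h4 : S v - S u - S v * (V v - V u) = -R - (B - (S v - S u)) := by
    rw [hBy, habel]; ring
  rw [h4]
  calc ‖-R - (B - (S v - S u))‖ ≤ ‖-R‖ + ‖B - (S v - S u)‖ := norm_sub_le _ _
    _ = ‖R‖ + ‖B - (S v - S u)‖ := by rw [norm_neg]
    _ ≤ e * w + ε := add_le_add hRem h3.le

end Stmt0Aux

namespace Stmt0Aux

lemma hw_of_BV {T : ℝ} {S : ℝ → ℂ} (hSBV : BoundedVariationOn S (Icc 0 T))
    {u v : ℝ} (hu : 0 ≤ u) (hvT : v ≤ T) :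
    ∀ (k : ℕ) (x : ℕ → ℝ), Monotone x → (∀ i, x i ∈ Icc u v) →
      ∑ i ∈ Finset.range k, ‖S (x (i+1)) - S (x i)‖ ≤
        (eVariationOn S (Icc u v)).toReal := by
  intro k x hmono hmem
  have h1 : ∑ i ∈ Finset.range k, edist (S (x (i+1))) (S (x i)) ≤
      eVariationOn S (Icc u v) := eVariationOn.sum_le (f := S) (n := k) hmono hmem
  have hsub : Icc u v ⊆ Icc 0 T := Icc_subset_Icc hu hvT
  have hfin : eVariationOn S (Icc u v) ≠ ⊤ :=
    ne_top_of_le_ne_top hSBV (eVariationOn.mono S hsub)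
  have h2 : ∑ i ∈ Finset.range k, ‖S (x (i+1)) - S (x i)‖ =
      (∑ i ∈ Finset.range k, edist (S (x (i+1))) (S (x i))).toReal := by
    rw [ENNReal.toReal_sum (fun a _ => edist_ne_top _ _)]
    apply Finset.sum_congr rfl
    intro i _
    rw [edist_dist, ENNReal.toReal_ofReal dist_nonneg, dist_eq_norm]
  rw [h2]
  exact ENNReal.toReal_mono hfin h1

lemma evar_add (S : ℝ → ℂ) {a b c : ℝ} (hab : a ≤ b) (hbc : b ≤ c) :
    eVariationOn S (Icc a b) + eVariationOn S (Icc b c) = eVariationOn S (Icc a c) := by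
  have h := eVariationOn.Icc_add_Icc S (s := (univ : Set ℝ)) hab hbc (mem_univ b)
  simpa using h

lemma evar_part (S : ℝ → ℂ) {y : ℕ → ℝ} (hy : Monotone y) (k : ℕ) :
    ∑ j ∈ Finset.range k, eVariationOn S (Icc (y j) (y (j+1))) ≤
      eVariationOn S (Icc (y 0) (y k)) := by
  induction k with
  | zero => simp
  | succ k ih =>
    rw [Finset.sum_range_succ]
    calc ∑ j ∈ Finset.range k, eVariationOn S (Icc (y j) (y (j+1))) +
          eVariationOn S (Icc (y k) (y (k+1)))
        ≤ eVariationOn S (Icc (y 0) (y k)) + eVariationOn S (Icc (y k) (y (k+1))) :=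
          add_le_add_left ih _
      _ = eVariationOn S (Icc (y 0) (y (k+1))) :=
          evar_add S (hy (Nat.zero_le k)) (hy (Nat.le_succ k))

lemma unif_cont {T : ℝ} {f : ℝ → ℂ} (hf : ContinuousOn f (Icc 0 T)) :
    ∀ ε > 0, ∃ δ > 0, ∀ x ∈ Icc 0 T, ∀ y ∈ Icc 0 T, |x - y| ≤ δ → ‖f x - f y‖ ≤ ε := by
  have h := (Metric.uniformContinuousOn_iff_le).mp
    (isCompact_Icc.uniformContinuousOn_of_continuous hf)
  intro ε hε
  obtain ⟨δ, hδ, H⟩ := h ε hε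
  refine ⟨δ, hδ, fun x hx y hy hxy => ?_⟩
  have := H x hx y hy (by rwa [Real.dist_eq])
  rwa [dist_eq_norm] at this

end Stmt0Aux

namespace Stmt0Aux

lemma arith1 {M m e w d : ℝ} (hm : 0 < m) (hM : 0 ≤ M) (he : 0 < e) (he1 : e ≤ 1)
    (hw : 0 ≤ w) (hd : 0 ≤ d) :
    e * w + d * e + M * (e * ((d + e * w)/m)) ≤ e * (1 + M/m) * (w + d) := by
  have key : M * (e * ((d + e * w)/m)) = (M/m) * (e * d) + (M/m) * (e * e * w) := by
    field_simp
  have h2 : (M/m) * (e * e * w) ≤ (M/m) * (e * w) := by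
    have h3 : 0 ≤ M/m := by positivity
    have h4 : e * e * w ≤ e * w := by
      have h5 : e * (e * w) ≤ 1 * (e * w) :=
        mul_le_mul_of_nonneg_right he1 (mul_nonneg he.le hw)
      nlinarith
    exact mul_le_mul_of_nonneg_left h4 h3
  have h3 : 0 ≤ M/m := by positivity
  nlinarith

lemma arith2 {C e M m W : ℝ} (hC : 0 < C) (he : 0 < e) (hM : 0 ≤ M) (hm : 0 < m)
    (hW : 0 ≤ W) :
    C * e * (1 + M/m) * (W + W) ≤ e * (C * 2 * (W+1) * (1 + M/m)) := by
  have h1 : 0 ≤ M/m := by positivity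
  have h2 : C * e * (1 + M/m) * (W + W) = e * (C * 2 * W * (1 + M/m)) := by ring
  rw [h2]
  refine mul_le_mul_of_nonneg_left ?_ he.le
  have h3 : C * 2 * W ≤ C * 2 * (W+1) := by nlinarith
  exact mul_le_mul_of_nonneg_right h3 (by linarith)

set_option maxHeartbeats 1000000 in
lemma keyB (T : ℝ) (S V : ℝ → ℂ)
    (hScont : ContinuousOn S (Icc 0 T))
    (hSBV : BoundedVariationOn S (Icc 0 T))
    (hVcont : ContinuousOn V (Icc 0 T))
    (heq : ∀ t ∈ Icc (0:ℝ) T, IsRSIntegral S V 0 t (S t))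
    {s t₁ : ℝ} (hs0 : 0 ≤ s) (hst : s ≤ t₁) (ht₁ : t₁ ≤ T)
    {m : ℝ} (hm : 0 < m) (hmS : ∀ x ∈ Icc s t₁, m ≤ ‖S x‖) :
    S t₁ * Complex.exp (-(V t₁)) = S s * Complex.exp (-(V s)) := by
  have hsub : Icc s t₁ ⊆ Icc 0 T := Icc_subset_Icc hs0 ht₁
  -- global bounds
  obtain ⟨M₀, hM₀⟩ := isCompact_Icc.exists_bound_of_continuousOn hScont
  set M := max M₀ 0 with hMdef
  have hM : ∀ x ∈ Icc 0 T, ‖S x‖ ≤ M := fun x hx => (hM₀ x hx).trans (le_max_left _ _)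
  have hM0 : 0 ≤ M := le_max_right _ _
  obtain ⟨B, hB⟩ := isCompact_Icc.exists_bound_of_continuousOn hVcont
  set C₀ := Real.exp B with hC₀def
  have hC₀ : 0 < C₀ := Real.exp_pos B
  have hC : ∀ x ∈ Icc 0 T, ‖Complex.exp (-(V x))‖ ≤ C₀ := by
    intro x hx
    rw [Complex.norm_exp]
    apply Real.exp_le_exp.mpr
    have h1 : |(V x).re| ≤ ‖V x‖ := Complex.abs_re_le_norm (V x)
    have h2 := hB x hx
    simp only [Complex.neg_re]
    cases abs_le.mp h1 with
    | intro hl hr => linarith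
  set W := (eVariationOn S (Icc s t₁)).toReal with hWdef
  have hW0 : 0 ≤ W := ENNReal.toReal_nonneg
  have hfinT : eVariationOn S (Icc 0 T) ≠ ⊤ := hSBV
  have hfinst : eVariationOn S (Icc s t₁) ≠ ⊤ :=
    ne_top_of_le_ne_top hfinT (eVariationOn.mono S hsub)
  -- reduce to an ε-estimate
  rw [← sub_eq_zero, ← norm_le_zero_iff]
  refine le_of_forall_pos_le_add ?_
  intro ε hε
  rw [zero_add]
  -- choose parameters
  set D := C₀ * 2 * (W+1) * (1 + M/m) with hDdef
  have hD : 0 < D := by positivity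
  set ε' := min 1 (ε / D) with hε'def
  have hε' : 0 < ε' := lt_min one_pos (div_pos hε hD)
  have hε'1 : ε' ≤ 1 := min_le_left _ _
  have hε'D : ε' * D ≤ ε := by
    have h1 : ε' ≤ ε / D := min_le_right _ _
    calc ε' * D ≤ (ε / D) * D := mul_le_mul_of_nonneg_right h1 hD.le
      _ = ε := by field_simp
  obtain ⟨h₀, hh₀, HV⟩ := unif_cont hVcont ε' hε'
  set k : ℕ := max 1 ⌈(t₁ - s)/h₀⌉₊ with hkdef
  have hk : 0 < k := lt_of_lt_of_le one_pos (le_max_left _ _)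
  have hmesh : (t₁ - s)/(k:ℝ) ≤ h₀ := div_nat_le (by linarith) hh₀
  set y : ℕ → ℝ := fun j => s + qpts (t₁ - s) k j with hy
  have hymono : Monotone y := fun i j hij =>
    add_le_add_right (qpts_mono (by linarith) k hij) s
  have hymem : ∀ j, y j ∈ Icc s t₁ := by
    intro j
    obtain ⟨h1, h2⟩ := qpts_mem (by linarith : (0:ℝ) ≤ t₁ - s) hk j
    simp only [hy]
    constructor <;> linarith
  have hymem' : ∀ j, y j ∈ Icc 0 T := fun j => hsub (hymem j)
  have hyk : y k = t₁ := by rw [hy]; simp only; rw [qpts_last _ hk]; ring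
  have hy0 : y 0 = s := by rw [hy]; simp only [qpts_zero, add_zero]
  have hystep : ∀ j, y (j+1) - y j ≤ h₀ := by
    intro j
    have := qpts_step (by linarith : (0:ℝ) ≤ t₁ - s) hk j
    have h2 : y (j+1) - y j = qpts (t₁-s) k (j+1) - qpts (t₁-s) k j := by
      simp only [hy]; ring
    linarith
  -- interval data
  set wf : ℕ → ℝ := fun j => (eVariationOn S (Icc (y j) (y (j+1)))).toReal with hwf
  set df : ℕ → ℝ := fun j => ‖S (y (j+1)) - S (y j)‖ with hdf
  have hwf0 : ∀ j, 0 ≤ wf j := fun j => ENNReal.toReal_nonneg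
  have hdf0 : ∀ j, 0 ≤ df j := fun j => norm_nonneg _
  have hfinj : ∀ j, eVariationOn S (Icc (y j) (y (j+1))) ≠ ⊤ := by
    intro j
    refine ne_top_of_le_ne_top hfinT (eVariationOn.mono S ?_)
    exact (Icc_subset_Icc (hymem j).1 (hymem (j+1)).2).trans hsub
  have hsumw : ∑ j ∈ Finset.range k, wf j ≤ W := by
    have h1 : ∑ j ∈ Finset.range k, eVariationOn S (Icc (y j) (y (j+1))) ≤
        eVariationOn S (Icc s t₁) := by
      have := evar_part S hymono k
      rwa [hy0, hyk] at this
    calc ∑ j ∈ Finset.range k, wf j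
        = (∑ j ∈ Finset.range k, eVariationOn S (Icc (y j) (y (j+1)))).toReal := by
          rw [ENNReal.toReal_sum (fun j _ => hfinj j)]
      _ ≤ W := ENNReal.toReal_mono hfinst h1
  have hsumd : ∑ j ∈ Finset.range k, df j ≤ W := by
    have := hw_of_BV hSBV hs0 ht₁ k y hymono hymem
    rwa [← hWdef] at this
  -- per-interval estimate
  have hj : ∀ j ∈ Finset.range k,
      ‖S (y (j+1)) * Complex.exp (-(V (y (j+1)))) - S (y j) * Complex.exp (-(V (y j)))‖
        ≤ C₀ * ε' * (1 + M/m) * (wf j + df j) := by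
    intro j _
    set u := y j with hu
    set v := y (j+1) with hv
    have huv : u ≤ v := hymono (Nat.le_succ j)
    have hu0 : 0 ≤ u := (hymem' j).1
    have hvT : v ≤ T := (hymem' (j+1)).2
    set z := V v - V u with hz
    have hzle : ‖z‖ ≤ ε' := by
      refine HV v (hymem' (j+1)) u (hymem' j) ?_
      rw [abs_of_nonneg (by linarith)]
      exact (hystep j)
    have hA : ‖S v - S u - S v * z‖ ≤ ε' * wf j := by
      refine keyA T S V heq hu0 huv hvT ?_ ?_
      · intro x hx
        refine HV x (hsub (Icc_subset_Icc (hymem j).1 (hymem (j+1)).2 hx)) u (hymem' j) ?_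
        rw [abs_of_nonneg (by linarith [hx.1])]
        linarith [hx.2, hystep j]
      · exact hw_of_BV hSBV hu0 hvT
    have hz2 : ‖z‖ ≤ (df j + ε' * wf j)/m := by
      rw [le_div_iff₀ hm]
      have h1 : m * ‖z‖ ≤ ‖S v‖ * ‖z‖ :=
        mul_le_mul_of_nonneg_right (hmS v (hymem (j+1))) (norm_nonneg z)
      have h2 : ‖S v‖ * ‖z‖ = ‖S v * z‖ := (norm_mul _ _).symm
      have h3 : ‖S v * z‖ ≤ ‖S v - S u‖ + ‖S v - S u - S v * z‖ := by
        calc ‖S v * z‖ = ‖(S v - S u) - (S v - S u - S v * z)‖ := by ring_nf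
          _ ≤ ‖S v - S u‖ + ‖S v - S u - S v * z‖ := norm_sub_le _ _
      have h4 : ‖S v - S u‖ = df j := rfl
      nlinarith [hA]
    have hexp : Complex.exp (-(V u)) = Complex.exp z * Complex.exp (-(V v)) := by
      rw [← Complex.exp_add]; congr 1; rw [hz]; ring
    have hGid : S v * Complex.exp (-(V v)) - S u * Complex.exp (-(V u))
        = Complex.exp (-(V v)) *
          ((S v - S u - S v * z) + (S v - S u) * z - S u * (Complex.exp z - 1 - z)) := by
      rw [hexp]; ring
    have hexpz : ‖Complex.exp z - 1 - z‖ ≤ ‖z‖ * ‖z‖ := by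
      have h1 : ‖z‖ ≤ 1 := by
        exact hzle.trans hε'1
      have := Complex.norm_exp_sub_one_sub_id_le h1
      rw [sq] at this
      exact this
    have hinner : ‖(S v - S u - S v * z) + (S v - S u) * z - S u * (Complex.exp z - 1 - z)‖
        ≤ ε' * wf j + df j * ε' + M * (ε' * ((df j + ε' * wf j)/m)) := by
      have t1 : ‖(S v - S u - S v * z) + (S v - S u) * z - S u * (Complex.exp z - 1 - z)‖
          ≤ ‖S v - S u - S v * z‖ + ‖(S v - S u) * z‖ + ‖S u * (Complex.exp z - 1 - z)‖ := by
        calc _ ≤ ‖(S v - S u - S v * z) + (S v - S u) * z‖ + ‖S u * (Complex.exp z - 1 - z)‖ :=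
              norm_sub_le _ _
          _ ≤ _ := by
              have := norm_add_le (S v - S u - S v * z) ((S v - S u) * z)
              linarith
      have t2 : ‖(S v - S u) * z‖ ≤ df j * ε' := by
        rw [norm_mul]
        exact mul_le_mul_of_nonneg_left hzle (norm_nonneg _)
      have t3 : ‖S u * (Complex.exp z - 1 - z)‖ ≤ M * (ε' * ((df j + ε' * wf j)/m)) := by
        rw [norm_mul]
        refine mul_le_mul (hM u (hymem' j)) ?_ (norm_nonneg _) hM0
        calc ‖Complex.exp z - 1 - z‖ ≤ ‖z‖ * ‖z‖ := hexpz
          _ ≤ ε' * ((df j + ε' * wf j)/m) :=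
            mul_le_mul hzle hz2 (norm_nonneg _) hε'.le
      linarith
    have hfinal : ε' * wf j + df j * ε' + M * (ε' * ((df j + ε' * wf j)/m))
        ≤ ε' * (1 + M/m) * (wf j + df j) :=
      arith1 hm hM0 hε' hε'1 (hwf0 j) (hdf0 j)
    calc ‖S v * Complex.exp (-(V v)) - S u * Complex.exp (-(V u))‖
        = ‖Complex.exp (-(V v))‖ *
          ‖(S v - S u - S v * z) + (S v - S u) * z - S u * (Complex.exp z - 1 - z)‖ := by
          rw [hGid, norm_mul]
      _ ≤ C₀ * (ε' * (1 + M/m) * (wf j + df j)) := by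
          refine mul_le_mul (hC v (hymem' (j+1))) (hinner.trans hfinal) (norm_nonneg _) hC₀.le
      _ = C₀ * ε' * (1 + M/m) * (wf j + df j) := by ring
  -- telescope
  have htel : S t₁ * Complex.exp (-(V t₁)) - S s * Complex.exp (-(V s))
      = ∑ j ∈ Finset.range k,
          (S (y (j+1)) * Complex.exp (-(V (y (j+1)))) - S (y j) * Complex.exp (-(V (y j)))) := by
    rw [Finset.sum_range_sub (fun j => S (y j) * Complex.exp (-(V (y j)))) k, hyk, hy0]
  rw [htel]
  calc ‖∑ j ∈ Finset.range k,
        (S (y (j+1)) * Complex.exp (-(V (y (j+1)))) - S (y j) * Complex.exp (-(V (y j))))‖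
      ≤ ∑ j ∈ Finset.range k,
        ‖S (y (j+1)) * Complex.exp (-(V (y (j+1)))) - S (y j) * Complex.exp (-(V (y j)))‖ :=
        norm_sum_le _ _
    _ ≤ ∑ j ∈ Finset.range k, C₀ * ε' * (1 + M/m) * (wf j + df j) := Finset.sum_le_sum hj
    _ = C₀ * ε' * (1 + M/m) *
        ((∑ j ∈ Finset.range k, wf j) + (∑ j ∈ Finset.range k, df j)) := by
        rw [← Finset.mul_sum, ← Finset.sum_add_distrib]
    _ ≤ C₀ * ε' * (1 + M/m) * (W + W) := by
        have h1 : 0 ≤ C₀ * ε' * (1 + M/m) := by positivity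
        refine mul_le_mul_of_nonneg_left ?_ h1
        exact add_le_add hsumw hsumd
    _ ≤ ε' * D := by
        rw [hDdef]
        exact arith2 hC₀ hε' hM0 hm hW0
    _ ≤ ε := hε'D

end Stmt0Aux

open Topology Stmt0Aux

/-- If `S : [0,T] → ℂ` is continuous of bounded variation, `V : [0,T] → ℂ` is continuous,
`S 0 = 0` and `S t = ∫₀ᵗ S dV` for all `t ∈ [0,T]`, then `S ≡ 0` on `[0,T]`. -/
theorem stmt0 (T : ℝ) (hT : 0 < T) (S V : ℝ → ℂ)
    (hScont : ContinuousOn S (Icc 0 T))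
    (hSBV : BoundedVariationOn S (Icc 0 T))
    (hVcont : ContinuousOn V (Icc 0 T))
    (hS0 : S 0 = 0)
    (heq : ∀ t ∈ Icc (0:ℝ) T, IsRSIntegral S V 0 t (S t)) :
    ∀ t ∈ Icc (0:ℝ) T, S t = 0 := by
  intro t ht
  by_contra hSt
  have ht0 : 0 < t := by
    rcases eq_or_lt_of_le ht.1 with h | h
    · exact absurd (h ▸ hS0) hSt
    · exact h
  set Z := {x : ℝ | x ∈ Icc 0 t ∧ S x = 0} with hZ
  have hZeq : Z = Icc 0 t ∩ S ⁻¹' {0} := by ext x; simp [hZ]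
  have hZc : IsClosed Z := by
    rw [hZeq]
    exact (hScont.mono (Icc_subset_Icc le_rfl ht.2)).preimage_isClosed_of_isClosed
      isClosed_Icc isClosed_singleton
  have hZne : Z.Nonempty := ⟨0, ⟨⟨le_rfl, ht0.le⟩, hS0⟩⟩
  have hZbdd : BddAbove Z := ⟨t, fun x hx => hx.1.2⟩
  set a := sSup Z with ha
  have haZ : a ∈ Z := hZc.csSup_mem hZne hZbdd
  have ha0 : 0 ≤ a := haZ.1.1
  have hat : a ≤ t := haZ.1.2
  have haSa : S a = 0 := haZ.2
  have halt : a < t := lt_of_le_of_ne hat (fun h => hSt (h ▸ haSa))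
  have hnz : ∀ x ∈ Ioc a t, S x ≠ 0 := by
    intro x hx hx0
    have hxZ : x ∈ Z := ⟨⟨le_trans ha0 hx.1.le, hx.2⟩, hx0⟩
    exact absurd (le_csSup hZbdd hxZ) (not_le.mpr hx.1)
  have hstep : ∀ s ∈ Ioc a t, S t * Complex.exp (-(V t)) = S s * Complex.exp (-(V s)) := by
    intro s hs
    have hs0 : 0 ≤ s := le_trans ha0 hs.1.le
    have hsub : Icc s t ⊆ Icc 0 T := Icc_subset_Icc hs0 ht.2
    obtain ⟨xm, hxm, hxmin⟩ := isCompact_Icc.exists_isMinOn (nonempty_Icc.mpr hs.2)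
      (continuous_norm.comp_continuousOn (hScont.mono hsub))
    have hm : 0 < ‖S xm‖ :=
      norm_pos_iff.mpr (hnz xm ⟨lt_of_lt_of_le hs.1 hxm.1, hxm.2⟩)
    exact keyB T S V hScont hSBV hVcont heq hs0 hs.2 ht.2 hm (fun x hx => hxmin hx)
  have hGc : ContinuousOn (fun x => S x * Complex.exp (-(V x))) (Icc 0 T) :=
    hScont.mul (Complex.continuous_exp.comp_continuousOn hVcont.neg)
  have hnebot : (𝓝[Ioc a t] a).NeBot := by
    rw [nhdsWithin_Ioc_eq_nhdsGT halt]
    infer_instance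
  have h1 : Tendsto (fun x => S x * Complex.exp (-(V x))) (𝓝[Ioc a t] a)
      (𝓝 (S a * Complex.exp (-(V a)))) := by
    have hc := hGc a ⟨ha0, le_trans hat ht.2⟩
    exact hc.tendsto.mono_left (nhdsWithin_mono a
      (fun x hx => ⟨le_trans ha0 hx.1.le, le_trans hx.2 ht.2⟩))
  have h2 : Tendsto (fun x => S x * Complex.exp (-(V x))) (𝓝[Ioc a t] a)
      (𝓝 (S t * Complex.exp (-(V t)))) := by
    refine Tendsto.congr' ?_ (tendsto_const_nhds (x := S t * Complex.exp (-(V t))))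
    filter_upwards [self_mem_nhdsWithin] with x hx
    exact hstep x hx
  have huniq := tendsto_nhds_unique h1 h2
  rw [haSa, zero_mul] at huniq
  rcases mul_eq_zero.mp huniq.symm with h | h
  · exact hSt h
  · exact absurd h (Complex.exp_ne_zero _)
end

section
/- If S : [0,T] → ℂ is a continuous function of bounded variation, V : [0,T] → ℂ is continuous, S(0) ≠ 0, and S(t) = S(0) + ∫₀ᵗ S(r) dV(r) for all t ∈ [0,T], then V is of bounded variation and S(t) = S(0)·exp(V(t) − V(0)) for all t ∈ [0,T]. -/
open Set Filter

namespace RSAux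

/-- number of steps of the uniform partition -/
noncomputable def unifN (a b δ : ℝ) : ℕ := max 1 ⌈(b - a) / δ⌉₊

lemma unifN_pos (a b δ : ℝ) : 0 < unifN a b δ := lt_of_lt_of_le Nat.one_pos (le_max_left _ _)

lemma unifN_cast_pos (a b δ : ℝ) : (0:ℝ) < (unifN a b δ : ℝ) := by
  exact_mod_cast unifN_pos a b δ

noncomputable def unifPts (a b δ : ℝ) : ℕ → ℝ :=
  fun i => a + (min i (unifN a b δ)) * ((b - a) / (unifN a b δ))

lemma unif_h_nonneg {a b : ℝ} (hab : a ≤ b) (δ : ℝ) : 0 ≤ (b - a) / (unifN a b δ) :=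
  div_nonneg (by linarith) (unifN_cast_pos a b δ).le

lemma unifPts_mono {a b : ℝ} (hab : a ≤ b) (δ : ℝ) : Monotone (unifPts a b δ) := by
  intro i j hij
  unfold unifPts
  have : ((min i (unifN a b δ) : ℕ) : ℝ) ≤ ((min j (unifN a b δ) : ℕ) : ℝ) := by
    exact_mod_cast min_le_min hij le_rfl
  nlinarith [unif_h_nonneg hab δ, mul_le_mul_of_nonneg_right this (unif_h_nonneg hab δ)]

lemma unifPts_zero {a b : ℝ} (δ : ℝ) : unifPts a b δ 0 = a := by
  simp [unifPts]

lemma unifPts_last {a b : ℝ} (δ : ℝ) : unifPts a b δ (unifN a b δ) = b := by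
  have h := unifN_cast_pos a b δ
  simp only [unifPts, min_self]
  field_simp
  ring

lemma unifPts_step {a b : ℝ} (δ : ℝ) {i : ℕ} (hi : i < unifN a b δ) :
    unifPts a b δ (i + 1) - unifPts a b δ i = (b - a) / (unifN a b δ) := by
  have h1 : min i (unifN a b δ) = i := min_eq_left hi.le
  have h2 : min (i+1) (unifN a b δ) = i + 1 := min_eq_left hi
  simp only [unifPts, h1, h2]
  push_cast
  ring

lemma unifPts_step_le {a b : ℝ} (hab : a ≤ b) {δ : ℝ} (hδ : 0 < δ) {i : ℕ}
    (hi : i < unifN a b δ) : unifPts a b δ (i + 1) - unifPts a b δ i ≤ δ := by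
  rw [unifPts_step δ hi]
  rw [div_le_iff₀ (unifN_cast_pos a b δ)]
  have h1 : (b - a) / δ ≤ (⌈(b - a)/δ⌉₊ : ℝ) := Nat.le_ceil _
  have h2 : ((⌈(b - a)/δ⌉₊ : ℕ) : ℝ) ≤ ((unifN a b δ : ℕ) : ℝ) := by
    exact_mod_cast le_max_right 1 _
  have := (div_le_iff₀ hδ).mp (h1.trans h2)
  linarith

lemma unifPts_mem {a b : ℝ} (hab : a ≤ b) (δ : ℝ) (i : ℕ) :
    unifPts a b δ i ∈ Icc a b := by
  constructor
  · have := mul_nonneg (Nat.cast_nonneg (min i (unifN a b δ))) (unif_h_nonneg hab δ)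
    simp only [unifPts]; linarith
  · have hle : unifPts a b δ i ≤ unifPts a b δ (max i (unifN a b δ)) :=
      unifPts_mono hab δ (le_max_left _ _)
    have heq2 : unifPts a b δ (max i (unifN a b δ)) = unifPts a b δ (unifN a b δ) := by
      simp [unifPts, min_eq_right (le_max_right i (unifN a b δ)), min_self]
    rw [heq2, unifPts_last δ] at hle
    exact hle

noncomputable def unif (a b δ : ℝ) (hab : a ≤ b) (hδ : 0 < δ) : TaggedPartition a b where
  n := unifN a b δ
  pts := unifPts a b δ
  tag := fun i => unifPts a b δ (i + 1)
  mono := fun i _ => unifPts_mono hab δ (Nat.le_succ i)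
  first := unifPts_zero δ
  last := unifPts_last δ
  tag_mem := fun i _ => ⟨unifPts_mono hab δ (Nat.le_succ i), le_rfl⟩

end RSAux

namespace RSAux

variable {a b c : ℝ}

noncomputable def concat (P : TaggedPartition a b) (Q : TaggedPartition b c) :
    TaggedPartition a c where
  n := P.n + Q.n
  pts := fun i => if i < P.n then P.pts i else Q.pts (i - P.n)
  tag := fun i => if i < P.n then P.tag i else Q.tag (i - P.n)
  mono := by
    intro i hi
    by_cases h1 : i < P.n
    · by_cases h2 : i + 1 < P.n
      · simp only [if_pos h1, if_pos h2]; exact P.mono i h1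
      · have h3 : i + 1 = P.n := by omega
        have e1 : Q.pts (i + 1 - P.n) = b := by rw [h3, Nat.sub_self, Q.first]
        simp only [if_pos h1, if_neg h2, e1]
        have h4 := P.mono i h1
        rw [h3, P.last] at h4
        exact h4
    · have h2 : ¬ (i + 1 < P.n) := by omega
      simp only [if_neg h1, if_neg h2]
      have h3 : i + 1 - P.n = (i - P.n) + 1 := by omega
      rw [h3]
      exact Q.mono (i - P.n) (by omega)
  first := by
    by_cases h : 0 < P.n
    · simp only [if_pos h, P.first]
    · have h0 : P.n = 0 := by omega
      have hab : a = b := by rw [← P.last, h0, P.first]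
      simp only [if_neg h, Nat.zero_sub, Q.first]
      exact hab.symm
  last := by
    have h : ¬ (P.n + Q.n < P.n) := by omega
    simp only [if_neg h, Nat.add_sub_cancel_left, Q.last]
  tag_mem := by
    intro i hi
    by_cases h1 : i < P.n
    · by_cases h2 : i + 1 < P.n
      · simp only [if_pos h1, if_pos h2]; exact P.tag_mem i h1
      · have h3 : i + 1 = P.n := by omega
        have e1 : Q.pts (i + 1 - P.n) = b := by rw [h3, Nat.sub_self, Q.first]
        simp only [if_pos h1, if_neg h2, e1]
        have h4 := P.tag_mem i h1
        rw [h3, P.last] at h4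
        exact h4
    · have h2 : ¬ (i + 1 < P.n) := by omega
      simp only [if_neg h1, if_neg h2]
      have h3 : i + 1 - P.n = (i - P.n) + 1 := by omega
      rw [h3]
      exact Q.tag_mem (i - P.n) (by omega)

lemma concat_pts_le (P : TaggedPartition a b) (Q : TaggedPartition b c) {i : ℕ}
    (hi : i ≤ P.n) : (concat P Q).pts i = P.pts i := by
  by_cases h : i < P.n
  · simp only [concat, if_pos h]
  · have h2 : i = P.n := by omega
    subst h2
    simp only [concat, if_neg h, Nat.sub_self, Q.first, P.last]

lemma concat_pts_ge (P : TaggedPartition a b) (Q : TaggedPartition b c) {i : ℕ}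
    (hi : P.n ≤ i) : (concat P Q).pts i = Q.pts (i - P.n) := by
  have h : ¬ (i < P.n) := by omega
  simp only [concat, if_neg h]

lemma concat_tag_lt (P : TaggedPartition a b) (Q : TaggedPartition b c) {i : ℕ}
    (hi : i < P.n) : (concat P Q).tag i = P.tag i := by
  simp only [concat, if_pos hi]

lemma concat_tag_ge (P : TaggedPartition a b) (Q : TaggedPartition b c) {i : ℕ}
    (hi : P.n ≤ i) : (concat P Q).tag i = Q.tag (i - P.n) := by
  simp only [concat, if_neg (by omega : ¬ (i < P.n))]

lemma concat_mesh (P : TaggedPartition a b) (Q : TaggedPartition b c) {δ : ℝ}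
    (hP : ∀ i, i < P.n → P.pts (i + 1) - P.pts i ≤ δ)
    (hQ : ∀ i, i < Q.n → Q.pts (i + 1) - Q.pts i ≤ δ) :
    ∀ i, i < (concat P Q).n → (concat P Q).pts (i + 1) - (concat P Q).pts i ≤ δ := by
  intro i hi
  have hn : (concat P Q).n = P.n + Q.n := rfl
  rw [hn] at hi
  by_cases h1 : i < P.n
  · rw [concat_pts_le P Q (by omega), concat_pts_le P Q (by omega : i ≤ P.n)]
    exact hP i h1
  · rw [concat_pts_ge P Q (by omega), concat_pts_ge P Q (by omega : P.n ≤ i)]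
    have h2 : i + 1 - P.n = (i - P.n) + 1 := by omega
    rw [h2]
    exact hQ (i - P.n) (by omega)

lemma riemannSum_concat (M N : ℝ → ℂ) (P : TaggedPartition a b) (Q : TaggedPartition b c) :
    riemannSum M N (concat P Q) = riemannSum M N P + riemannSum M N Q := by
  have hn : (concat P Q).n = P.n + Q.n := rfl
  unfold riemannSum
  rw [hn, Finset.sum_range_add]
  congr 1
  · apply Finset.sum_congr rfl
    intro i hi
    have hi' : i < P.n := Finset.mem_range.mp hi
    rw [concat_tag_lt P Q hi', concat_pts_le P Q (by omega), concat_pts_le P Q (by omega : i ≤ P.n)]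
  · apply Finset.sum_congr rfl
    intro j hj
    have e1 : P.n + j - P.n = j := by omega
    have e2 : P.n + j + 1 - P.n = j + 1 := by omega
    rw [concat_tag_ge P Q (by omega : P.n ≤ P.n + j),
      concat_pts_ge P Q (by omega : P.n ≤ P.n + j + 1),
      concat_pts_ge P Q (by omega : P.n ≤ P.n + j), e1, e2]

end RSAux

namespace RSAux

lemma sum_norm_sub_le (f : ℝ → ℂ) {s : Set ℝ} (hfin : BoundedVariationOn f s)
    {u : ℕ → ℝ} (hu : Monotone u) (hus : ∀ i, u i ∈ s) (n : ℕ) :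
    ∑ i ∈ Finset.range n, ‖f (u (i + 1)) - f (u i)‖ ≤ (eVariationOn f s).toReal := by
  have h := eVariationOn.sum_le (f := f) (n := n) hu hus
  have h2 : ∑ i ∈ Finset.range n, ‖f (u (i + 1)) - f (u i)‖
      = (∑ i ∈ Finset.range n, edist (f (u (i + 1))) (f (u i))).toReal := by
    rw [ENNReal.toReal_sum (fun a _ => edist_ne_top _ _)]
    apply Finset.sum_congr rfl
    intro i _
    rw [← dist_edist, dist_eq_norm]
  rw [h2]
  exact ENNReal.toReal_mono hfin h

lemma evar_sum_le (f : ℝ → ℂ) {u : ℕ → ℝ} (hu : Monotone u) (n : ℕ) :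
    ∑ i ∈ Finset.range n, eVariationOn f (Icc (u i) (u (i + 1)))
      ≤ eVariationOn f (Icc (u 0) (u n)) := by
  induction n with
  | zero => simp
  | succ n ih =>
    rw [Finset.sum_range_succ]
    have h := eVariationOn.Icc_add_Icc f (s := univ) (hu (Nat.zero_le n))
      (hu (Nat.le_succ n)) (mem_univ (u n))
    simp only [univ_inter] at h
    calc ∑ i ∈ Finset.range n, eVariationOn f (Icc (u i) (u (i + 1)))
          + eVariationOn f (Icc (u n) (u (n + 1)))
        ≤ eVariationOn f (Icc (u 0) (u n)) + eVariationOn f (Icc (u n) (u (n + 1))) := by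
          exact add_le_add ih le_rfl
      _ = eVariationOn f (Icc (u 0) (u (n + 1))) := h

lemma locInt (T : ℝ) (S V : ℝ → ℂ)
    (heq : ∀ t ∈ Icc (0:ℝ) T, IsRSIntegral S V 0 t (S t - S 0))
    {x y : ℝ} (hx : 0 ≤ x) (hxy : x ≤ y) (hyT : y ≤ T) :
    ∀ ε > 0, ∃ δ > 0, ∀ P : TaggedPartition x y,
      (∀ i, i < P.n → P.pts (i + 1) - P.pts i ≤ δ) →
      ‖riemannSum S V P - (S y - S x)‖ < ε := by
  intro ε hε
  obtain ⟨δ₁, hδ₁, h1⟩ := heq y ⟨hx.trans hxy, hyT⟩ (ε/2) (by linarith)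
  obtain ⟨δ₂, hδ₂, h2⟩ := heq x ⟨hx, hxy.trans hyT⟩ (ε/2) (by linarith)
  have hδ : (0:ℝ) < min δ₁ δ₂ := lt_min hδ₁ hδ₂
  refine ⟨min δ₁ δ₂, hδ, ?_⟩
  intro P hP
  set Q : TaggedPartition 0 x := unif 0 x (min δ₁ δ₂) hx hδ with hQdef
  have hQmesh : ∀ i, i < Q.n → Q.pts (i + 1) - Q.pts i ≤ min δ₁ δ₂ := by
    intro i hi
    exact unifPts_step_le hx hδ hi
  have hQP := h1 (concat Q P)
    (concat_mesh Q P (fun i hi => (hQmesh i hi).trans (min_le_left _ _))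
      (fun i hi => (hP i hi).trans (min_le_left _ _)))
  have hQQ := h2 Q (fun i hi => (hQmesh i hi).trans (min_le_right _ _))
  rw [riemannSum_concat] at hQP
  have key : riemannSum S V P - (S y - S x)
      = (riemannSum S V Q + riemannSum S V P - (S y - S 0))
        - (riemannSum S V Q - (S x - S 0)) := by ring
  rw [key]
  calc ‖_ - _‖ ≤ ‖riemannSum S V Q + riemannSum S V P - (S y - S 0)‖
        + ‖riemannSum S V Q - (S x - S 0)‖ := norm_sub_le _ _
    _ < ε/2 + ε/2 := add_lt_add hQP hQQ
    _ = ε := by ring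

lemma key_estimate (T : ℝ) (S V : ℝ → ℂ)
    (hSBV : BoundedVariationOn S (Icc 0 T))
    (heq : ∀ t ∈ Icc (0:ℝ) T, IsRSIntegral S V 0 t (S t - S 0))
    {x y : ℝ} (hx : 0 ≤ x) (hxy : x ≤ y) (hyT : y ≤ T) {C : ℝ}
    (hosc : ∀ u ∈ Icc x y, ‖V u - V x‖ ≤ C) :
    ‖S y * (V y - V x) - (S y - S x)‖ ≤ C * (eVariationOn S (Icc x y)).toReal := by
  have hfin : BoundedVariationOn S (Icc x y) :=
    ne_top_of_le_ne_top hSBV (eVariationOn.mono S (Icc_subset_Icc hx hyT))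
  apply le_of_forall_pos_le_add
  intro ε hε
  obtain ⟨δ, hδ, hloc⟩ := locInt T S V heq hx hxy hyT ε hε
  set P : TaggedPartition x y := unif x y δ hxy hδ with hPdef
  set p := unifPts x y δ with hpdef
  set n := unifN x y δ with hndef
  have hmesh : ∀ i, i < P.n → P.pts (i + 1) - P.pts i ≤ δ := by
    intro i hi
    exact unifPts_step_le hxy hδ hi
  have h1 := hloc P hmesh
  have e1 : riemannSum S V P
      = ∑ i ∈ Finset.range n, S (p (i + 1)) * (V (p (i + 1)) - V (p i)) := rfl
  set B := ∑ i ∈ Finset.range n, (V (p i) - V x) * (S (p (i + 1)) - S (p i)) with hBdef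
  have e2 : riemannSum S V P + B = S y * (V y - V x) := by
    rw [e1, hBdef, ← Finset.sum_add_distrib]
    have hc : ∀ i ∈ Finset.range n,
        S (p (i + 1)) * (V (p (i + 1)) - V (p i)) + (V (p i) - V x) * (S (p (i + 1)) - S (p i))
        = (S (p (i + 1)) * V (p (i + 1)) - S (p i) * V (p i))
          - V x * (S (p (i + 1)) - S (p i)) := fun i _ => by ring
    rw [Finset.sum_congr rfl hc, Finset.sum_sub_distrib,
      Finset.sum_range_sub (fun i => S (p i) * V (p i)), ← Finset.mul_sum,
      Finset.sum_range_sub (fun i => S (p i))]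
    have hp0 : p 0 = x := unifPts_zero δ
    have hpn : p n = y := unifPts_last δ
    rw [hp0, hpn]
    ring
  have hBnorm : ‖B‖ ≤ C * (eVariationOn S (Icc x y)).toReal := by
    have hCnn : 0 ≤ C := by simpa using hosc x ⟨le_rfl, hxy⟩
    calc ‖B‖ ≤ ∑ i ∈ Finset.range n, ‖(V (p i) - V x) * (S (p (i + 1)) - S (p i))‖ :=
        norm_sum_le _ _
      _ ≤ ∑ i ∈ Finset.range n, C * ‖S (p (i + 1)) - S (p i)‖ := by
        apply Finset.sum_le_sum
        intro i _
        rw [norm_mul]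
        exact mul_le_mul_of_nonneg_right (hosc _ (unifPts_mem hxy δ i)) (norm_nonneg _)
      _ = C * ∑ i ∈ Finset.range n, ‖S (p (i + 1)) - S (p i)‖ := by rw [Finset.mul_sum]
      _ ≤ C * (eVariationOn S (Icc x y)).toReal := by
        apply mul_le_mul_of_nonneg_left _ hCnn
        exact sum_norm_sub_le S hfin (unifPts_mono hxy δ) (unifPts_mem hxy δ) n
  have e3 : S y * (V y - V x) - (S y - S x)
      = (riemannSum S V P - (S y - S x)) + B := by
    rw [← e2]; ring
  rw [e3]
  calc ‖_ + B‖ ≤ ‖riemannSum S V P - (S y - S x)‖ + ‖B‖ := norm_add_le _ _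
    _ ≤ ε + C * (eVariationOn S (Icc x y)).toReal := add_le_add h1.le hBnorm
    _ = C * (eVariationOn S (Icc x y)).toReal + ε := by ring

end RSAux

namespace RSAux

lemma bv_lemma (T : ℝ) (S V : ℝ → ℂ)
    (hSBV : BoundedVariationOn S (Icc 0 T))
    (heq : ∀ t ∈ Icc (0:ℝ) T, IsRSIntegral S V 0 t (S t - S 0))
    {t m K : ℝ} (ht0 : 0 ≤ t) (htT : t ≤ T) (hm : 0 < m)
    (hSm : ∀ u ∈ Icc (0:ℝ) t, m ≤ ‖S u‖)
    (hK : ∀ u ∈ Icc (0:ℝ) T, ∀ w ∈ Icc (0:ℝ) T, ‖V u - V w‖ ≤ K) :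
    BoundedVariationOn V (Icc 0 t) := by
  have hsubT : Icc (0:ℝ) t ⊆ Icc (0:ℝ) T := Icc_subset_Icc le_rfl htT
  have hSBVt : eVariationOn S (Icc 0 t) ≠ ⊤ :=
    ne_top_of_le_ne_top hSBV (eVariationOn.mono S hsubT)
  have hK0 : 0 ≤ K := by
    have h0T : (0:ℝ) ∈ Icc (0:ℝ) T := ⟨le_rfl, ht0.trans htT⟩
    simpa using hK 0 h0T 0 h0T
  set varS : ℝ := (eVariationOn S (Icc 0 t)).toReal with hvarS
  have hbound : eVariationOn V (Icc 0 t) ≤ ENNReal.ofReal ((K + 1) * varS / m) := by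
    apply iSup_le
    rintro ⟨n, u, hu, hus⟩
    have hreal : ∑ i ∈ Finset.range n, ‖V (u (i + 1)) - V (u i)‖ ≤ (K + 1) * varS / m := by
      have hterm : ∀ i ∈ Finset.range n, ‖V (u (i + 1)) - V (u i)‖
          ≤ (K * (eVariationOn S (Icc (u i) (u (i + 1)))).toReal
            + ‖S (u (i + 1)) - S (u i)‖) / m := by
        intro i _
        have hui := hus i
        have hui1 := hus (i + 1)
        have hkey := key_estimate T S V hSBV heq (hui.1) (hu (Nat.le_succ i))
          (hui1.2.trans htT) (C := K)
          (fun w hw => hK w (hsubT ⟨hui.1.trans hw.1, hw.2.trans hui1.2⟩) (u i) (hsubT hui))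
        have h1 : m * ‖V (u (i + 1)) - V (u i)‖
            ≤ ‖S (u (i + 1)) * (V (u (i + 1)) - V (u i))‖ := by
          rw [norm_mul]
          exact mul_le_mul_of_nonneg_right (hSm _ hui1) (norm_nonneg _)
        have h2 : ‖S (u (i + 1)) * (V (u (i + 1)) - V (u i))‖
            ≤ ‖S (u (i + 1)) * (V (u (i + 1)) - V (u i)) - (S (u (i + 1)) - S (u i))‖
              + ‖S (u (i + 1)) - S (u i)‖ := by
          have h3 := norm_add_le (S (u (i + 1)) * (V (u (i + 1)) - V (u i))
            - (S (u (i + 1)) - S (u i))) (S (u (i + 1)) - S (u i))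
          simpa using h3
        rw [le_div_iff₀ hm]
        nlinarith [hkey, h1, h2]
      have hfin_i : ∀ i, eVariationOn S (Icc (u i) (u (i + 1))) ≠ ⊤ := fun i =>
        ne_top_of_le_ne_top hSBVt
          (eVariationOn.mono S (Icc_subset_Icc (hus i).1 (hus (i + 1)).2))
      have hs1 : ∑ i ∈ Finset.range n, (eVariationOn S (Icc (u i) (u (i + 1)))).toReal
          ≤ varS := by
        rw [← ENNReal.toReal_sum (fun i _ => hfin_i i)]
        exact ENNReal.toReal_mono hSBVt ((evar_sum_le S hu n).trans
          (eVariationOn.mono S (Icc_subset_Icc (hus 0).1 (hus n).2)))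
      have hs2 : ∑ i ∈ Finset.range n, ‖S (u (i + 1)) - S (u i)‖ ≤ varS :=
        sum_norm_sub_le S hSBVt hu hus n
      calc ∑ i ∈ Finset.range n, ‖V (u (i + 1)) - V (u i)‖
          ≤ ∑ i ∈ Finset.range n, (K * (eVariationOn S (Icc (u i) (u (i + 1)))).toReal
            + ‖S (u (i + 1)) - S (u i)‖) / m := Finset.sum_le_sum hterm
        _ = (K * ∑ i ∈ Finset.range n, (eVariationOn S (Icc (u i) (u (i + 1)))).toReal
            + ∑ i ∈ Finset.range n, ‖S (u (i + 1)) - S (u i)‖) / m := by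
          rw [← Finset.sum_div, Finset.sum_add_distrib, Finset.mul_sum]
        _ ≤ (K * varS + varS) / m := by
          have hnum : K * ∑ i ∈ Finset.range n,
              (eVariationOn S (Icc (u i) (u (i + 1)))).toReal
              + ∑ i ∈ Finset.range n, ‖S (u (i + 1)) - S (u i)‖ ≤ K * varS + varS :=
            add_le_add (mul_le_mul_of_nonneg_left hs1 hK0) hs2
          exact div_le_div_of_nonneg_right hnum hm.le
        _ = (K + 1) * varS / m := by ring
    calc ∑ i ∈ Finset.range n, edist (V (u (i + 1))) (V (u i))
        = ENNReal.ofReal (∑ i ∈ Finset.range n, ‖V (u (i + 1)) - V (u i)‖) := by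
          rw [ENNReal.ofReal_sum_of_nonneg (fun i _ => norm_nonneg _)]
          apply Finset.sum_congr rfl
          intro i _
          rw [edist_dist, dist_eq_norm]
      _ ≤ ENNReal.ofReal ((K + 1) * varS / m) := ENNReal.ofReal_le_ofReal hreal
  exact ne_top_of_le_ne_top ENNReal.ofReal_ne_top hbound

end RSAux

namespace RSAux

lemma exp_formula (T : ℝ) (S V : ℝ → ℂ)
    (hSBV : BoundedVariationOn S (Icc 0 T))
    (heq : ∀ t ∈ Icc (0:ℝ) T, IsRSIntegral S V 0 t (S t - S 0))
    {Ms K : ℝ}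
    (hMs : ∀ u ∈ Icc (0:ℝ) T, ‖S u‖ ≤ Ms)
    (hK : ∀ u ∈ Icc (0:ℝ) T, ∀ w ∈ Icc (0:ℝ) T, ‖V u - V w‖ ≤ K)
    (hVuc : ∀ ε > 0, ∃ δ > 0, ∀ a ∈ Icc (0:ℝ) T, ∀ b ∈ Icc (0:ℝ) T,
      |a - b| ≤ δ → ‖V a - V b‖ ≤ ε)
    {t : ℝ} (ht0 : 0 ≤ t) (htT : t ≤ T)
    (hVBV : BoundedVariationOn V (Icc 0 t)) :
    S t = S 0 * Complex.exp (V t - V 0) := by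
  have hT0 : (0:ℝ) ∈ Icc (0:ℝ) T := ⟨le_rfl, ht0.trans htT⟩
  have hsubT : Icc (0:ℝ) t ⊆ Icc (0:ℝ) T := Icc_subset_Icc le_rfl htT
  have hSBVt : eVariationOn S (Icc 0 t) ≠ ⊤ :=
    ne_top_of_le_ne_top hSBV (eVariationOn.mono S hsubT)
  have hMs0 : 0 ≤ Ms := (norm_nonneg _).trans (hMs 0 hT0)
  have hK0 : 0 ≤ K := by simpa using hK 0 hT0 0 hT0
  set varS : ℝ := (eVariationOn S (Icc 0 t)).toReal with hvarS
  set varV : ℝ := (eVariationOn V (Icc 0 t)).toReal with hvarV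
  have hvarS0 : 0 ≤ varS := ENNReal.toReal_nonneg
  have hvarV0 : 0 ≤ varV := ENNReal.toReal_nonneg
  set E : ℝ := Real.exp K with hE
  have hE0 : 0 < E := Real.exp_pos K
  have hexp_bd : ∀ u ∈ Icc (0:ℝ) T, ‖Complex.exp (-(V u - V 0))‖ ≤ E := by
    intro u hu
    rw [Complex.norm_exp]
    apply Real.exp_le_exp.mpr
    have h1 : |(V u - V 0).re| ≤ ‖V u - V 0‖ := Complex.abs_re_le_norm _
    have h2 : ‖V u - V 0‖ ≤ K := hK u hu 0 hT0
    have : (-(V u - V 0)).re = -(V u - V 0).re := by simp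
    rw [this]
    cases abs_le.mp h1 with
    | intro hl hr => linarith
  set D : ℝ := E * (2 * varS + Ms * varV) with hD
  have hD0 : 0 ≤ D := by positivity
  -- main estimate
  have main : ∀ ε > 0, ‖S t * Complex.exp (-(V t - V 0)) - S 0‖ ≤ ε := by
    intro ε hε
    set η : ℝ := min 1 (ε / (D + 1)) with hη
    have hη0 : 0 < η := lt_min one_pos (by positivity)
    have hη1 : η ≤ 1 := min_le_left _ _
    obtain ⟨δ, hδ0, hδ⟩ := hVuc η hη0
    set p := unifPts 0 t δ with hp
    set n := unifN 0 t δ with hn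
    have hpmem : ∀ i, p i ∈ Icc (0:ℝ) t := unifPts_mem ht0 δ
    have hpmono : Monotone p := unifPts_mono ht0 δ
    have hosc : ∀ i, i < n → ∀ w ∈ Icc (p i) (p (i + 1)), ‖V w - V (p i)‖ ≤ η := by
      intro i hi w hw
      apply hδ w (hsubT ⟨(hpmem i).1.trans hw.1, hw.2.trans (hpmem (i+1)).2⟩)
        (p i) (hsubT (hpmem i))
      have hstep := unifPts_step_le ht0 hδ0 hi
      have : p i ≤ w ∧ w ≤ p (i + 1) := ⟨hw.1, hw.2⟩
      rw [abs_sub_le_iff]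
      constructor <;> linarith
    have hΔV : ∀ i, i < n → ‖V (p (i + 1)) - V (p i)‖ ≤ η := by
      intro i hi
      exact hosc i hi (p (i + 1)) ⟨hpmono (Nat.le_succ i), le_rfl⟩
    set g : ℕ → ℂ := fun i => S (p i) * Complex.exp (-(V (p i) - V 0)) with hg
    have htel : g n - g 0 = ∑ i ∈ Finset.range n, (g (i + 1) - g i) :=
      (Finset.sum_range_sub g n).symm
    have hfin_i : ∀ i, eVariationOn S (Icc (p i) (p (i + 1))) ≠ ⊤ := fun i =>
      ne_top_of_le_ne_top hSBVt
        (eVariationOn.mono S (Icc_subset_Icc (hpmem i).1 (hpmem (i + 1)).2))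
    have hterm : ∀ i ∈ Finset.range n, ‖g (i + 1) - g i‖
        ≤ E * (η * (eVariationOn S (Icc (p i) (p (i + 1)))).toReal
          + η * ‖S (p (i + 1)) - S (p i)‖ + Ms * η * ‖V (p (i + 1)) - V (p i)‖) := by
      intro i hir
      have hi : i < n := Finset.mem_range.mp hir
      set ΔV : ℂ := V (p (i + 1)) - V (p i) with hΔVdef
      have hfact : g (i + 1) - g i
          = Complex.exp (-(V (p (i + 1)) - V 0))
            * (S (p (i + 1)) - S (p i) * Complex.exp ΔV) := by
        have hcomb : Complex.exp ΔV * Complex.exp (-(V (p (i + 1)) - V 0))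
            = Complex.exp (-(V (p i) - V 0)) := by
          rw [← Complex.exp_add]; congr 1; rw [hΔVdef]; ring
        simp only [hg]
        linear_combination (S (p i)) * hcomb
      have hkey := key_estimate T S V hSBV heq (hpmem i).1 (hpmono (Nat.le_succ i))
        ((hpmem (i + 1)).2.trans htT) (C := η) (hosc i hi)
      have hdecomp : S (p (i + 1)) - S (p i) * Complex.exp ΔV
          = -(S (p (i + 1)) * ΔV - (S (p (i + 1)) - S (p i)))
            + (S (p (i + 1)) - S (p i)) * ΔV
            - S (p i) * (Complex.exp ΔV - 1 - ΔV) := by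
        ring
      have hexpbd : ‖Complex.exp ΔV - 1 - ΔV‖ ≤ ‖ΔV‖^2 := by
        have := Complex.norm_exp_sub_one_sub_id_le (x := ΔV)
          ((hΔV i hi).trans hη1)
        simpa using this
      have h3 : ‖S (p (i + 1)) - S (p i) * Complex.exp ΔV‖
          ≤ η * (eVariationOn S (Icc (p i) (p (i + 1)))).toReal
            + η * ‖S (p (i + 1)) - S (p i)‖ + Ms * η * ‖ΔV‖ := by
        rw [hdecomp]
        have t1 : ‖-(S (p (i + 1)) * ΔV - (S (p (i + 1)) - S (p i)))‖
            ≤ η * (eVariationOn S (Icc (p i) (p (i + 1)))).toReal := by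
          rw [norm_neg]; exact hkey
        have t2 : ‖(S (p (i + 1)) - S (p i)) * ΔV‖ ≤ ‖S (p (i + 1)) - S (p i)‖ * η := by
          rw [norm_mul]
          exact mul_le_mul_of_nonneg_left (hΔV i hi) (norm_nonneg _)
        have t3 : ‖S (p i) * (Complex.exp ΔV - 1 - ΔV)‖ ≤ Ms * (η * ‖ΔV‖) := by
          rw [norm_mul]
          have hb : ‖Complex.exp ΔV - 1 - ΔV‖ ≤ η * ‖ΔV‖ := by
            have := hexpbd
            have h4 : ‖ΔV‖^2 ≤ η * ‖ΔV‖ := by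
              have := hΔV i hi
              nlinarith [norm_nonneg ΔV]
            linarith
          exact mul_le_mul (hMs _ (hsubT (hpmem i))) hb (norm_nonneg _) hMs0
        calc ‖_ + _ - _‖ ≤ ‖-(S (p (i + 1)) * ΔV - (S (p (i + 1)) - S (p i)))
              + (S (p (i + 1)) - S (p i)) * ΔV‖ + ‖S (p i) * (Complex.exp ΔV - 1 - ΔV)‖ :=
            norm_sub_le _ _
          _ ≤ ‖-(S (p (i + 1)) * ΔV - (S (p (i + 1)) - S (p i)))‖
              + ‖(S (p (i + 1)) - S (p i)) * ΔV‖ + ‖S (p i) * (Complex.exp ΔV - 1 - ΔV)‖ := by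
            have := norm_add_le (-(S (p (i + 1)) * ΔV - (S (p (i + 1)) - S (p i))))
              ((S (p (i + 1)) - S (p i)) * ΔV)
            linarith
          _ ≤ η * (eVariationOn S (Icc (p i) (p (i + 1)))).toReal
              + η * ‖S (p (i + 1)) - S (p i)‖ + Ms * η * ‖ΔV‖ := by
            rw [mul_assoc Ms η]
            have t2' : ‖(S (p (i + 1)) - S (p i)) * ΔV‖ ≤ η * ‖S (p (i + 1)) - S (p i)‖ := by
              rw [mul_comm η]; exact t2
            linarith
      rw [hfact, norm_mul]
      exact mul_le_mul (hexp_bd _ (hsubT (hpmem (i + 1)))) h3 (norm_nonneg _) hE0.le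
    have hsum : ‖g n - g 0‖ ≤ η * D := by
      rw [htel]
      have hs1 : ∑ i ∈ Finset.range n, (eVariationOn S (Icc (p i) (p (i + 1)))).toReal
          ≤ varS := by
        rw [← ENNReal.toReal_sum (fun i _ => hfin_i i)]
        exact ENNReal.toReal_mono hSBVt ((evar_sum_le S hpmono n).trans
          (eVariationOn.mono S (Icc_subset_Icc (hpmem 0).1 (hpmem n).2)))
      have hs2 : ∑ i ∈ Finset.range n, ‖S (p (i + 1)) - S (p i)‖ ≤ varS :=
        sum_norm_sub_le S hSBVt hpmono hpmem n
      have hs3 : ∑ i ∈ Finset.range n, ‖V (p (i + 1)) - V (p i)‖ ≤ varV :=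
        sum_norm_sub_le V hVBV hpmono hpmem n
      calc ‖∑ i ∈ Finset.range n, (g (i + 1) - g i)‖
          ≤ ∑ i ∈ Finset.range n, ‖g (i + 1) - g i‖ := norm_sum_le _ _
        _ ≤ ∑ i ∈ Finset.range n, E * (η * (eVariationOn S (Icc (p i) (p (i + 1)))).toReal
            + η * ‖S (p (i + 1)) - S (p i)‖ + Ms * η * ‖V (p (i + 1)) - V (p i)‖) :=
          Finset.sum_le_sum hterm
        _ = ∑ i ∈ Finset.range n, (E * η * (eVariationOn S (Icc (p i) (p (i + 1)))).toReal
            + E * η * ‖S (p (i + 1)) - S (p i)‖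
            + E * η * Ms * ‖V (p (i + 1)) - V (p i)‖) :=
          Finset.sum_congr rfl (fun i _ => by ring)
        _ = E * η * (∑ i ∈ Finset.range n, (eVariationOn S (Icc (p i) (p (i + 1)))).toReal)
            + E * η * (∑ i ∈ Finset.range n, ‖S (p (i + 1)) - S (p i)‖)
            + E * η * Ms * (∑ i ∈ Finset.range n, ‖V (p (i + 1)) - V (p i)‖) := by
          rw [Finset.sum_add_distrib, Finset.sum_add_distrib, ← Finset.mul_sum,
            ← Finset.mul_sum, ← Finset.mul_sum]
        _ ≤ η * D := by
          have hEη : 0 ≤ E * η := by positivity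
          have A1 : E * η * (∑ i ∈ Finset.range n,
              (eVariationOn S (Icc (p i) (p (i + 1)))).toReal) ≤ E * η * varS :=
            mul_le_mul_of_nonneg_left hs1 hEη
          have A2 : E * η * (∑ i ∈ Finset.range n, ‖S (p (i + 1)) - S (p i)‖)
              ≤ E * η * varS := mul_le_mul_of_nonneg_left hs2 hEη
          have A3 : E * η * Ms * (∑ i ∈ Finset.range n, ‖V (p (i + 1)) - V (p i)‖)
              ≤ E * η * Ms * varV :=
            mul_le_mul_of_nonneg_left hs3 (by positivity)
          have hDeq : η * D = E * η * varS + E * η * varS + E * η * Ms * varV := by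
            rw [hD]; ring
          linarith
    have hgn : g n = S t * Complex.exp (-(V t - V 0)) := by
      have hpn : p n = t := unifPts_last δ
      show S (p n) * Complex.exp (-(V (p n) - V 0)) = _
      rw [hpn]
    have hg0 : g 0 = S 0 := by
      have hp0 : p 0 = 0 := unifPts_zero δ
      show S (p 0) * Complex.exp (-(V (p 0) - V 0)) = _
      rw [hp0]
      simp
    rw [hgn, hg0] at hsum
    have hηD : η * D ≤ ε := by
      have h1 : η ≤ ε / (D + 1) := min_le_right _ _
      have h2 : η * D ≤ (ε / (D + 1)) * D := mul_le_mul_of_nonneg_right h1 hD0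
      have h3 : (ε / (D + 1)) * D ≤ ε := by
        rw [div_mul_eq_mul_div, div_le_iff₀ (by positivity)]
        nlinarith
      linarith
    exact hsum.trans hηD
  -- conclude
  have hzero : S t * Complex.exp (-(V t - V 0)) - S 0 = 0 := by
    have hle : ‖S t * Complex.exp (-(V t - V 0)) - S 0‖ ≤ 0 := by
      by_contra h
      push_neg at h
      have := main (‖S t * Complex.exp (-(V t - V 0)) - S 0‖ / 2) (by linarith)
      linarith
    simpa using norm_le_zero_iff.mp hle
  have hfix : S t * Complex.exp (-(V t - V 0)) = S 0 := by
    linear_combination hzero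
  calc S t = S t * (Complex.exp (-(V t - V 0)) * Complex.exp (V t - V 0)) := by
        rw [← Complex.exp_add]
        simp
    _ = (S t * Complex.exp (-(V t - V 0))) * Complex.exp (V t - V 0) := by ring
    _ = S 0 * Complex.exp (V t - V 0) := by rw [hfix]

end RSAux

open RSAux

/-- If `S : [0,T]` is continuous of bounded variation, `V : [0,T]` is continuous,
`S 0 ≠ 0` and `S t = S 0 + ∫₀ᵗ S dV` on `[0,T]`, then `V` has bounded variation and
`S t = S 0 · exp (V t − V 0)` on `[0,T]`. -/
theorem stmt1 (T : ℝ) (hT : 0 < T) (S V : ℝ → ℂ)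
    (hScont : ContinuousOn S (Icc 0 T))
    (hSBV : BoundedVariationOn S (Icc 0 T))
    (hVcont : ContinuousOn V (Icc 0 T))
    (hS0 : S 0 ≠ 0)
    (heq : ∀ t ∈ Icc (0:ℝ) T, IsRSIntegral S V 0 t (S t - S 0)) :
    BoundedVariationOn V (Icc 0 T) ∧
      ∀ t ∈ Icc (0:ℝ) T, S t = S 0 * Complex.exp (V t - V 0) := by
  have h0T : (0:ℝ) ∈ Icc (0:ℝ) T := ⟨le_rfl, hT.le⟩
  -- bound for V
  obtain ⟨K0, hK0⟩ := isCompact_Icc.exists_bound_of_continuousOn hVcont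
  set K : ℝ := 2 * K0 with hKdef
  have hK : ∀ u ∈ Icc (0:ℝ) T, ∀ w ∈ Icc (0:ℝ) T, ‖V u - V w‖ ≤ K := by
    intro u hu w hw
    calc ‖V u - V w‖ ≤ ‖V u‖ + ‖V w‖ := norm_sub_le _ _
      _ ≤ K0 + K0 := add_le_add (hK0 u hu) (hK0 w hw)
      _ = K := by rw [hKdef]; ring
  -- bound for S
  obtain ⟨Ms, hMs⟩ := isCompact_Icc.exists_bound_of_continuousOn hScont
  -- uniform continuity of V
  have hVuc : ∀ ε > 0, ∃ δ > 0, ∀ a ∈ Icc (0:ℝ) T, ∀ b ∈ Icc (0:ℝ) T,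
      |a - b| ≤ δ → ‖V a - V b‖ ≤ ε := by
    intro ε hε
    have huc := isCompact_Icc.uniformContinuousOn_of_continuous hVcont
    rw [Metric.uniformContinuousOn_iff_le] at huc
    obtain ⟨δ, hδ0, hδ⟩ := huc ε hε
    exact ⟨δ, hδ0, fun a ha b hb hab => by
      have := hδ a ha b hb (by rwa [Real.dist_eq]) 
      rwa [dist_eq_norm] at this⟩
  -- nonvanishing of S
  have hlow : ∀ s : ℝ, 0 ≤ s → s ≤ T → (∀ u ∈ Icc (0:ℝ) s, S u ≠ 0) →
      S s = S 0 * Complex.exp (V s - V 0) ∧ ‖S 0‖ * Real.exp (-K) ≤ ‖S s‖ := by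
    intro s hs0 hsT hnz
    obtain ⟨z, hz, hzmin⟩ := isCompact_Icc.exists_isMinOn (nonempty_Icc.mpr hs0)
      ((hScont.mono (Icc_subset_Icc le_rfl hsT)).norm)
    have hm : 0 < ‖S z‖ := norm_pos_iff.mpr (hnz z hz)
    have hSm : ∀ u ∈ Icc (0:ℝ) s, ‖S z‖ ≤ ‖S u‖ := fun u hu => hzmin hu
    have hVBV : BoundedVariationOn V (Icc 0 s) :=
      bv_lemma T S V hSBV heq hs0 hsT hm hSm hK
    have hform := exp_formula T S V hSBV heq hMs hK hVuc hs0 hsT hVBV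
    refine ⟨hform, ?_⟩
    rw [hform, norm_mul, Complex.norm_exp]
    apply mul_le_mul_of_nonneg_left _ (norm_nonneg _)
    apply Real.exp_le_exp.mpr
    have h1 : |(V s - V 0).re| ≤ ‖V s - V 0‖ := Complex.abs_re_le_norm _
    have h2 : ‖V s - V 0‖ ≤ K := hK s ⟨hs0, hsT⟩ 0 h0T
    cases abs_le.mp h1 with
    | intro hl hr => linarith
  have hnv : ∀ s ∈ Icc (0:ℝ) T, S s ≠ 0 := by
    by_contra h
    push_neg at h
    obtain ⟨s₀, hs₀, hSs₀⟩ := h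
    set A : Set ℝ := Icc 0 T ∩ S ⁻¹' {0} with hA
    have hAne : A.Nonempty := ⟨s₀, hs₀, by simpa using hSs₀⟩
    have hAclosed : IsClosed A :=
      hScont.preimage_isClosed_of_isClosed isClosed_Icc isClosed_singleton
    have hAbdd : BddBelow A := ⟨0, fun x hx => hx.1.1⟩
    set c : ℝ := sInf A with hc
    have hcA : c ∈ A := hAclosed.csInf_mem hAne hAbdd
    have hSc : S c = 0 := by simpa using hcA.2
    have hc0 : 0 < c := by
      rcases lt_or_eq_of_le hcA.1.1 with h' | h'
      · exact h'
      · exact absurd (h' ▸ hSc) hS0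
    have hclaim : ∀ s : ℝ, 0 ≤ s → s < c → ‖S 0‖ * Real.exp (-K) ≤ ‖S s‖ := by
      intro s hs0 hsc
      have hsT : s ≤ T := hsc.le.trans hcA.1.2
      have hnz : ∀ u ∈ Icc (0:ℝ) s, S u ≠ 0 := by
        intro u hu hSu
        have huA : u ∈ A := ⟨⟨hu.1, hu.2.trans hsT⟩, by simpa using hSu⟩
        have := csInf_le hAbdd huA
        have : c ≤ u := this
        linarith [hu.2]
      exact (hlow s hs0 hsT hnz).2
    -- continuity contradiction at c
    have hcw : ContinuousWithinAt S (Icc 0 T) c := hScont c hcA.1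
    have hεpos : 0 < ‖S 0‖ * Real.exp (-K) := mul_pos (norm_pos_iff.mpr hS0) (Real.exp_pos _)
    rw [Metric.continuousWithinAt_iff] at hcw
    obtain ⟨δ, hδ0, hδ⟩ := hcw (‖S 0‖ * Real.exp (-K)) hεpos
    set s : ℝ := c - min (δ/2) (c/2) with hs
    have hmin0 : 0 < min (δ/2) (c/2) := lt_min (by linarith) (by linarith)
    have hs0 : 0 ≤ s := by
      have : min (δ/2) (c/2) ≤ c/2 := min_le_right _ _
      rw [hs]; linarith
    have hsc : s < c := by rw [hs]; linarith
    have hsT : s ∈ Icc (0:ℝ) T := ⟨hs0, hsc.le.trans hcA.1.2⟩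
    have hdist : dist s c < δ := by
      rw [Real.dist_eq, hs]
      have h1 : min (δ/2) (c/2) ≤ δ/2 := min_le_left _ _
      rw [abs_of_nonpos (by linarith)]
      linarith
    have hlt := hδ hsT hdist
    rw [hSc, dist_eq_norm, sub_zero] at hlt
    have hge := hclaim s hs0 hsc
    linarith
  -- conclusion
  obtain ⟨z, hz, hzmin⟩ := isCompact_Icc.exists_isMinOn (nonempty_Icc.mpr hT.le)
    hScont.norm
  have hm : 0 < ‖S z‖ := norm_pos_iff.mpr (hnv z hz)
  have hVBV : BoundedVariationOn V (Icc 0 T) :=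
    bv_lemma T S V hSBV heq hT.le le_rfl hm (fun u hu => hzmin hu) hK
  refine ⟨hVBV, ?_⟩
  intro t ht
  have hVBVt : BoundedVariationOn V (Icc 0 t) :=
    ne_top_of_le_ne_top hVBV (eVariationOn.mono V (Icc_subset_Icc le_rfl ht.2))
  exact exp_formula T S V hSBV heq hMs hK hVuc ht.1 ht.2 hVBVt
end

section
/- Let S be continuous of bounded variation on [0,T] with S(0) = 0 and S(t) = ∫₀ᵗ S dV for a continuous V. Then the zero set Z(S) = {t ∈ [0,T] : S(t) = 0} is all of [0,T]; in particular S never vanishes on an interval (a,b) with S(a) = 0 unless S ≡ 0 on [a,b]. -/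
open Set Filter

namespace TaggedPartition

variable {a b c : ℝ}

theorem pts_le_pts (P : TaggedPartition a b) :
    ∀ j, j ≤ P.n → ∀ i, i ≤ j → P.pts i ≤ P.pts j := by
  intro j
  induction j with
  | zero => intro _ i hi; have : i = 0 := Nat.le_zero.mp hi; simp [this]
  | succ k ih =>
    intro hk i hi
    rcases Nat.eq_or_lt_of_le hi with h | h
    · simp [h]
    · exact le_trans (ih (by omega) i (by omega)) (P.mono k (by omega))

theorem a_le_b (P : TaggedPartition a b) : a ≤ b := by
  have := P.pts_le_pts P.n le_rfl 0 (Nat.zero_le _)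
  rwa [P.first, P.last] at this

theorem pts_mem (P : TaggedPartition a b) {i : ℕ} (hi : i ≤ P.n) : P.pts i ∈ Set.Icc a b := by
  constructor
  · have := P.pts_le_pts i hi 0 (Nat.zero_le _); rwa [P.first] at this
  · have := P.pts_le_pts P.n le_rfl i hi; rwa [P.last] at this

theorem tag_mem' (P : TaggedPartition a b) {i : ℕ} (hi : i < P.n) : P.tag i ∈ Set.Icc a b := by
  obtain ⟨h1, h2⟩ := P.tag_mem i hi
  exact ⟨le_trans (P.pts_mem (le_of_lt hi)).1 h1, le_trans h2 (P.pts_mem hi).2⟩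

end TaggedPartition

theorem exists_fine (a b δ : ℝ) (hab : a ≤ b) (hδ : 0 < δ) :
    ∃ P : TaggedPartition a b, ∀ i, i < P.n → P.pts (i + 1) - P.pts i ≤ δ := by
  set n : ℕ := max 1 ⌈(b - a) / δ⌉₊ with hn
  have hn0 : 0 < n := lt_of_lt_of_le one_pos (le_max_left _ _)
  have hnR : (0:ℝ) < n := by exact_mod_cast hn0
  have hban : 0 ≤ b - a := by linarith
  have hstep : (b - a) / n ≤ δ := by
    rw [div_le_iff₀ hnR]
    have h1 : (b - a) / δ ≤ (n:ℝ) := le_trans (Nat.le_ceil _) (by exact_mod_cast le_max_right 1 _)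
    calc b - a = ((b - a) / δ) * δ := by field_simp
    _ ≤ n * δ := mul_le_mul_of_nonneg_right h1 hδ.le
    _ = δ * n := by ring
  have hstep0 : 0 ≤ (b - a) / n := div_nonneg hban hnR.le
  have hmono : ∀ i, i < n → a + (min i n : ℕ) * ((b - a) / n) ≤ a + (min (i+1) n : ℕ) * ((b - a) / n) := by
    intro i _
    have : ((min i n : ℕ) : ℝ) ≤ ((min (i+1) n : ℕ) : ℝ) := by
      exact_mod_cast min_le_min (Nat.le_succ i) (le_refl n)
    nlinarith
  refine ⟨⟨n, fun i => a + (min i n : ℕ) * ((b - a) / n),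
      fun i => a + (min i n : ℕ) * ((b - a) / n), hmono, by simp, ?_, fun i hi => ⟨le_rfl, hmono i hi⟩⟩, ?_⟩
  · simp only [min_self]
    field_simp
    ring
  · intro i hi
    have h1 : ((min (i+1) n : ℕ) : ℝ) ≤ ((min i n : ℕ) : ℝ) + 1 := by
      have : min (i+1) n ≤ min i n + 1 := by omega
      exact_mod_cast this
    have h2 : ((min i n : ℕ) : ℝ) ≤ ((min (i+1) n : ℕ) : ℝ) := by
      exact_mod_cast min_le_min (Nat.le_succ i) (le_refl n)
    simp only
    nlinarith

namespace TaggedPartition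

variable {a b c : ℝ}

noncomputable def concat (Q : TaggedPartition a b) (P : TaggedPartition b c) :
    TaggedPartition a c where
  n := Q.n + P.n
  pts := fun i => if i ≤ Q.n then Q.pts i else P.pts (i - Q.n)
  tag := fun i => if i < Q.n then Q.tag i else P.tag (i - Q.n)
  mono := by
    intro i hi
    beta_reduce
    rcases Nat.lt_or_ge i Q.n with h | h
    · simp only [if_pos (Nat.le_of_lt h), if_pos (show i + 1 ≤ Q.n from h)]
      exact Q.mono i h
    · have e1 : (if i ≤ Q.n then Q.pts i else P.pts (i - Q.n)) = P.pts (i - Q.n) := by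
        rcases Nat.eq_or_lt_of_le h with h' | h'
        · rw [if_pos (le_of_eq h'.symm), ← h', Nat.sub_self, P.first, Q.last]
        · rw [if_neg (by omega)]
      rw [e1, if_neg (by omega), show i + 1 - Q.n = (i - Q.n) + 1 from by omega]
      exact P.mono (i - Q.n) (by omega)
  first := by simp [Q.first]
  last := by
    beta_reduce
    by_cases hp : P.n = 0
    · rw [if_pos (by omega), hp]
      have h2 := P.last
      rw [hp, P.first] at h2
      rw [← h2, Nat.add_zero, Q.last]
    · rw [if_neg (by omega), Nat.add_sub_cancel_left, P.last]
  tag_mem := by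
    intro i hi
    beta_reduce
    rcases Nat.lt_or_ge i Q.n with h | h
    · simp only [if_pos h, if_pos (Nat.le_of_lt h), if_pos (show i + 1 ≤ Q.n from h)]
      exact Q.tag_mem i h
    · have e1 : (if i ≤ Q.n then Q.pts i else P.pts (i - Q.n)) = P.pts (i - Q.n) := by
        rcases Nat.eq_or_lt_of_le h with h' | h'
        · rw [if_pos (le_of_eq h'.symm), ← h', Nat.sub_self, P.first, Q.last]
        · rw [if_neg (by omega)]
      simp only [if_neg (show ¬ i < Q.n from by omega), e1,
        if_neg (show ¬ i + 1 ≤ Q.n from by omega),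
        show i + 1 - Q.n = (i - Q.n) + 1 from by omega]
      exact P.tag_mem (i - Q.n) (by omega)

@[simp] theorem concat_n (Q : TaggedPartition a b) (P : TaggedPartition b c) :
    (Q.concat P).n = Q.n + P.n := rfl

theorem concat_pts (Q : TaggedPartition a b) (P : TaggedPartition b c) (i : ℕ) :
    (Q.concat P).pts i = if i ≤ Q.n then Q.pts i else P.pts (i - Q.n) := rfl

theorem concat_tag (Q : TaggedPartition a b) (P : TaggedPartition b c) (i : ℕ) :
    (Q.concat P).tag i = if i < Q.n then Q.tag i else P.tag (i - Q.n) := rfl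

theorem concat_pts_ge (Q : TaggedPartition a b) (P : TaggedPartition b c) {i : ℕ}
    (h : Q.n ≤ i) : (Q.concat P).pts i = P.pts (i - Q.n) := by
  rw [concat_pts]
  rcases Nat.eq_or_lt_of_le h with h' | h'
  · rw [if_pos (le_of_eq h'.symm), ← h', Nat.sub_self, P.first, Q.last]
  · rw [if_neg (by omega)]

theorem concat_fine (Q : TaggedPartition a b) (P : TaggedPartition b c) {δ : ℝ}
    (hQ : ∀ i, i < Q.n → Q.pts (i + 1) - Q.pts i ≤ δ)
    (hP : ∀ i, i < P.n → P.pts (i + 1) - P.pts i ≤ δ) :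
    ∀ i, i < (Q.concat P).n → (Q.concat P).pts (i + 1) - (Q.concat P).pts i ≤ δ := by
  intro i hi
  rw [concat_n] at hi
  rcases Nat.lt_or_ge i Q.n with h | h
  · rw [concat_pts, concat_pts, if_pos (Nat.le_of_lt h), if_pos (show i + 1 ≤ Q.n from h)]
    exact hQ i h
  · rw [concat_pts_ge Q P (le_trans h (Nat.le_succ i)), concat_pts_ge Q P h,
      show i + 1 - Q.n = (i - Q.n) + 1 from by omega]
    exact hP _ (by omega)

end TaggedPartition

theorem riemannSum_concat (M N : ℝ → ℂ) {a b c : ℝ} (Q : TaggedPartition a b)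
    (P : TaggedPartition b c) :
    riemannSum M N (Q.concat P) = riemannSum M N Q + riemannSum M N P := by
  unfold riemannSum
  rw [TaggedPartition.concat_n, Finset.sum_range_add]
  congr 1
  · apply Finset.sum_congr rfl
    intro i hi
    have h : i < Q.n := Finset.mem_range.mp hi
    rw [TaggedPartition.concat_tag, TaggedPartition.concat_pts, TaggedPartition.concat_pts,
      if_pos h, if_pos (Nat.le_of_lt h), if_pos (show i + 1 ≤ Q.n from h)]
  · apply Finset.sum_congr rfl
    intro j hj
    have h : j < P.n := Finset.mem_range.mp hj
    rw [TaggedPartition.concat_tag, if_neg (show ¬ Q.n + j < Q.n from by omega),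
      TaggedPartition.concat_pts_ge Q P (show Q.n ≤ Q.n + j + 1 from by omega),
      TaggedPartition.concat_pts_ge Q P (show Q.n ≤ Q.n + j from by omega),
      show Q.n + j - Q.n = j from by omega, show Q.n + j + 1 - Q.n = j + 1 from by omega]

theorem rs_bound {M N : ℝ → ℂ} {a b : ℝ} {I : ℂ} (hab : a ≤ b) (h : IsRSIntegral M N a b I)
    {B : ℝ} (hB : ∀ P : TaggedPartition a b, ‖riemannSum M N P‖ ≤ B) : ‖I‖ ≤ B := by
  by_contra hc
  push_neg at hc
  obtain ⟨δ, hδ, hP⟩ := h (‖I‖ - B) (by linarith)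
  obtain ⟨P, hPf⟩ := exists_fine a b δ hab hδ
  have h1 := hP P hPf
  have h2 := hB P
  have h3 : ‖I‖ ≤ ‖riemannSum M N P‖ + ‖riemannSum M N P - I‖ := by
    have : I = riemannSum M N P - (riemannSum M N P - I) := by ring
    calc ‖I‖ = ‖riemannSum M N P - (riemannSum M N P - I)‖ := by rw [← this]
    _ ≤ _ := norm_sub_le _ _
  linarith

theorem var_sum_bound (S : ℝ → ℂ) {s : Set ℝ} (h : eVariationOn S s ≠ ⊤) (k : ℕ) {u : ℕ → ℝ}
    (hu : Monotone u) (hus : ∀ i, u i ∈ s) :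
    ∑ i ∈ Finset.range k, ‖S (u (i + 1)) - S (u i)‖ ≤ (eVariationOn S s).toReal := by
  rw [← ENNReal.ofReal_le_iff_le_toReal h,
    ENNReal.ofReal_sum_of_nonneg (fun i _ => norm_nonneg _)]
  refine le_trans (le_of_eq ?_) (eVariationOn.sum_le (f := S) (n := k) hu hus)
  apply Finset.sum_congr rfl
  intro i _
  rw [edist_eq_enorm_sub, ofReal_norm]

theorem norm_sub_le_var (S : ℝ → ℂ) {A B : ℝ} (hAB : A ≤ B)
    (h : eVariationOn S (Set.Icc A B) ≠ ⊤) :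
    ‖S B - S A‖ ≤ (eVariationOn S (Set.Icc A B)).toReal := by
  have := var_sum_bound S h 1 (u := fun i => if i = 0 then A else B)
    (monotone_nat_of_le_succ (by
      intro i
      by_cases h0 : i = 0 <;> simp [h0, hAB]))
    (by intro i; by_cases h0 : i = 0 <;> simp [h0, hAB, Set.mem_Icc, le_refl])
  simpa using this

theorem evar_sum (S : ℝ → ℂ) {s : ℕ → ℝ} (hs : Monotone s) (k : ℕ) :
    ∑ j ∈ Finset.range k, eVariationOn S (Set.Icc (s j) (s (j + 1)))
      = eVariationOn S (Set.Icc (s 0) (s k)) := by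
  induction k with
  | zero =>
    have h0 : eVariationOn S (Set.Icc (s 0) (s 0)) = 0 :=
      eVariationOn.subsingleton S (by rw [Set.Icc_self]; exact Set.subsingleton_singleton)
    simp [h0]
  | succ k ih =>
    rw [Finset.sum_range_succ, ih]
    have h := eVariationOn.Icc_add_Icc S (s := Set.univ) (hs (Nat.zero_le k))
      (hs (Nat.le_succ k)) (Set.mem_univ _)
    simpa [Set.univ_inter] using h

theorem abel_bound {a b : ℝ} (V g : ℝ → ℂ) (P : TaggedPartition a b)
    (hga : g a = 0) {C W : ℝ} (hC0 : 0 ≤ C)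
    (hC : ∀ s ∈ Set.Icc a b, ‖V s - V b‖ ≤ C) (hW : 0 ≤ W)
    (hsum : ∀ (k : ℕ) (u : ℕ → ℝ), Monotone u → (∀ i, u i ∈ Set.Icc a b) →
      ∑ i ∈ Finset.range k, ‖g (u (i + 1)) - g (u i)‖ ≤ W) :
    ‖riemannSum g V P‖ ≤ C * W := by
  rcases Nat.eq_zero_or_pos P.n with hn | hn
  · rw [riemannSum, hn]
    simp only [Finset.range_zero, Finset.sum_empty, norm_zero]
    positivity
  set n := P.n with hndef
  set u : ℕ → ℝ := fun i => if i = 0 then a else P.tag (min (i - 1) (n - 1)) with hu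
  have humono : Monotone u := by
    apply monotone_nat_of_le_succ
    intro i
    match i with
    | 0 =>
      show a ≤ P.tag (min 0 (n - 1))
      rw [Nat.min_eq_left (Nat.zero_le _)]
      have := (P.tag_mem 0 hn).1
      rwa [P.first] at this
    | (i + 1) =>
      show P.tag (min i (n - 1)) ≤ P.tag (min (i + 1) (n - 1))
      rcases Nat.lt_or_ge i (n - 1) with h | h
      · rw [Nat.min_eq_left (le_of_lt h), Nat.min_eq_left (by omega)]
        exact le_trans (P.tag_mem i (by omega)).2 (P.tag_mem (i + 1) (by omega)).1
      · rw [Nat.min_eq_right h, Nat.min_eq_right (by omega)]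
  have humem : ∀ i, u i ∈ Set.Icc a b := by
    intro i
    match i with
    | 0 => exact ⟨le_rfl, P.a_le_b⟩
    | (i + 1) => exact P.tag_mem' (by omega)
  set G : ℕ → ℂ := fun i => g (u i) with hG
  have hG0 : G 0 = 0 := by simp [hG, hu, hga]
  have hGt : ∀ i, i < n → G (i + 1) = g (P.tag i) := by
    intro i hi
    simp only [hG, hu]
    rw [if_neg (Nat.succ_ne_zero i), Nat.add_sub_cancel, Nat.min_eq_left (by omega)]
  have key : riemannSum g V P = ∑ i ∈ Finset.range n, (G (i + 1) - G i) * (V b - V (P.pts i)) := by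
    have h1 : riemannSum g V P
        = ∑ i ∈ Finset.range n, G (i + 1) * (V (P.pts (i + 1)) - V (P.pts i)) := by
      apply Finset.sum_congr rfl
      intro i hi
      rw [hGt i (Finset.mem_range.mp hi)]
    rw [h1]
    have h3 : ∑ i ∈ Finset.range n, (G (i + 1) * V (P.pts (i + 1)) - G i * V (P.pts i))
        = G n * V (P.pts n) - G 0 * V (P.pts 0) :=
      Finset.sum_range_sub (fun i => G i * V (P.pts i)) n
    have h4 : ∑ i ∈ Finset.range n, (G (i + 1) - G i) = G n - G 0 := Finset.sum_range_sub G n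
    have h5 : (∑ i ∈ Finset.range n, G (i + 1) * (V (P.pts (i + 1)) - V (P.pts i)))
        - ∑ i ∈ Finset.range n, (G (i + 1) - G i) * (V b - V (P.pts i)) = 0 := by
      rw [← Finset.sum_sub_distrib]
      have h2 : ∀ x ∈ Finset.range n, G (x + 1) * (V (P.pts (x + 1)) - V (P.pts x))
          - (G (x + 1) - G x) * (V b - V (P.pts x))
          = (G (x + 1) * V (P.pts (x + 1)) - G x * V (P.pts x)) - (G (x + 1) - G x) * V b := by
        intro x _; ring
      rw [Finset.sum_congr rfl h2, Finset.sum_sub_distrib, h3, ← Finset.sum_mul, h4, hG0, P.last]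
      ring
    have := sub_eq_zero.mp h5
    exact this
  rw [key]
  calc ‖∑ i ∈ Finset.range n, (G (i + 1) - G i) * (V b - V (P.pts i))‖
      ≤ ∑ i ∈ Finset.range n, ‖(G (i + 1) - G i) * (V b - V (P.pts i))‖ := norm_sum_le _ _
  _ ≤ ∑ i ∈ Finset.range n, ‖G (i + 1) - G i‖ * C := by
      apply Finset.sum_le_sum
      intro i hi
      rw [norm_mul]
      apply mul_le_mul_of_nonneg_left _ (norm_nonneg _)
      rw [norm_sub_rev]
      exact hC _ (P.pts_mem (le_of_lt (Finset.mem_range.mp hi)))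
  _ = (∑ i ∈ Finset.range n, ‖g (u (i + 1)) - g (u i)‖) * C := by rw [← Finset.sum_mul]
  _ ≤ W * C := mul_le_mul_of_nonneg_right (hsum n u humono humem) hC0
  _ = C * W := mul_comm _ _

theorem RS_star (T : ℝ) (S V : ℝ → ℂ) (hSBV : BoundedVariationOn S (Set.Icc 0 T))
    (heq : ∀ t ∈ Set.Icc (0:ℝ) T, IsRSIntegral S V 0 t (S t))
    {a b : ℝ} (ha : 0 ≤ a) (hab : a ≤ b) (hbT : b ≤ T)
    {C : ℝ} (hC0 : 0 ≤ C) (hC : ∀ s ∈ Set.Icc a b, ‖V s - V b‖ ≤ C) :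
    ‖(S b - S a) - S a * (V b - V a)‖ ≤ C * (eVariationOn S (Set.Icc a b)).toReal := by
  have haT : a ∈ Set.Icc (0:ℝ) T := ⟨ha, le_trans hab hbT⟩
  have hbTm : b ∈ Set.Icc (0:ℝ) T := ⟨le_trans ha hab, hbT⟩
  -- additivity: ∫_a^b S dV = S b - S a
  have hadd : IsRSIntegral S V a b (S b - S a) := by
    intro ε hε
    obtain ⟨δ₁, hδ₁, h1⟩ := heq b hbTm (ε / 2) (by linarith)
    obtain ⟨δ₂, hδ₂, h2⟩ := heq a haT (ε / 2) (by linarith)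
    refine ⟨min δ₁ δ₂, lt_min hδ₁ hδ₂, ?_⟩
    intro P hP
    obtain ⟨Q, hQ⟩ := exists_fine 0 a (min δ₁ δ₂) ha (lt_min hδ₁ hδ₂)
    have hfine := Q.concat_fine P hQ hP
    have hR1 := h1 (Q.concat P) (fun i hi => le_trans (hfine i hi) (min_le_left _ _))
    have hR2 := h2 Q (fun i hi => le_trans (hQ i hi) (min_le_right _ _))
    rw [riemannSum_concat] at hR1
    have hEq : riemannSum S V P - (S b - S a)
        = (riemannSum S V Q + riemannSum S V P - S b) - (riemannSum S V Q - S a) := by ring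
    rw [hEq]
    calc ‖_ - _‖ ≤ ‖riemannSum S V Q + riemannSum S V P - S b‖ + ‖riemannSum S V Q - S a‖ :=
      norm_sub_le _ _
    _ < ε := by linarith
  -- constant integral
  have hconst : IsRSIntegral (fun _ => S a) V a b (S a * (V b - V a)) := by
    intro ε hε
    refine ⟨1, one_pos, fun P _ => ?_⟩
    have hsum : riemannSum (fun _ => S a) V P = S a * (V b - V a) := by
      unfold riemannSum
      rw [← Finset.mul_sum, Finset.sum_range_sub (fun i => V (P.pts i)), P.first, P.last]
    rw [hsum]
    simpa using hε
  -- difference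
  have hdiff : IsRSIntegral (fun s => S s - S a) V a b ((S b - S a) - S a * (V b - V a)) := by
    intro ε hε
    obtain ⟨δ₁, hδ₁, h1⟩ := hadd (ε / 2) (by linarith)
    obtain ⟨δ₂, hδ₂, h2⟩ := hconst (ε / 2) (by linarith)
    refine ⟨min δ₁ δ₂, lt_min hδ₁ hδ₂, ?_⟩
    intro P hP
    have hR1 := h1 P (fun i hi => le_trans (hP i hi) (min_le_left _ _))
    have hR2 := h2 P (fun i hi => le_trans (hP i hi) (min_le_right _ _))
    have hsplit : riemannSum (fun s => S s - S a) V P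
        = riemannSum S V P - riemannSum (fun _ => S a) V P := by
      unfold riemannSum
      rw [← Finset.sum_sub_distrib]
      apply Finset.sum_congr rfl
      intro i _
      ring
    have hEq : riemannSum (fun s => S s - S a) V P - ((S b - S a) - S a * (V b - V a))
        = (riemannSum S V P - (S b - S a))
          - (riemannSum (fun _ => S a) V P - S a * (V b - V a)) := by
      rw [hsplit]; ring
    rw [hEq]
    calc ‖_ - _‖ ≤ ‖riemannSum S V P - (S b - S a)‖
        + ‖riemannSum (fun _ => S a) V P - S a * (V b - V a)‖ := norm_sub_le _ _
    _ < ε := by linarith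
  -- variation finiteness
  have hvfin : eVariationOn S (Set.Icc a b) ≠ ⊤ := by
    have hle := eVariationOn.mono S (Set.Icc_subset_Icc ha hbT : Set.Icc a b ⊆ Set.Icc 0 T)
    exact fun h => hSBV (top_le_iff.mp (h ▸ hle : (⊤:ENNReal) ≤ eVariationOn S (Set.Icc 0 T)))
  -- conclude
  apply rs_bound hab hdiff
  intro P
  apply abel_bound V (fun s => S s - S a) P (by simp) hC0 hC ENNReal.toReal_nonneg
  intro k u hu hus
  have hEq : ∀ i ∈ Finset.range k, ‖(S (u (i + 1)) - S a) - (S (u i) - S a)‖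
      = ‖S (u (i + 1)) - S (u i)‖ := by
    intro i _
    rw [sub_sub_sub_cancel_right]
  rw [Finset.sum_congr rfl hEq]
  exact var_sum_bound S hvfin k hu hus


/-- If `S : [0,T] → ℂ` is continuous of bounded variation with `S 0 = 0` and
`S t = ∫₀ᵗ S dV` for a continuous `V`, then the zero set of `S` is all of `[0,T]`;
in particular, if `S a = 0` then `S` vanishes identically on any `[a,b] ⊆ [0,T]`. -/
theorem stmt2 (T : ℝ) (hT : 0 < T) (S V : ℝ → ℂ)
    (hScont : ContinuousOn S (Icc 0 T))
    (hSBV : BoundedVariationOn S (Icc 0 T))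
    (hVcont : ContinuousOn V (Icc 0 T))
    (hS0 : S 0 = 0)
    (heq : ∀ t ∈ Icc (0:ℝ) T, IsRSIntegral S V 0 t (S t)) :
    {t ∈ Icc (0:ℝ) T | S t = 0} = Icc (0:ℝ) T ∧
      ∀ a b : ℝ, a ∈ Icc (0:ℝ) T → b ∈ Icc (0:ℝ) T → a ≤ b → S a = 0 →
        ∀ t ∈ Icc a b, S t = 0 := by

  obtain ⟨K, hK⟩ := isCompact_Icc.exists_bound_of_continuousOn hVcont
  have h0T : (0:ℝ) ∈ Icc (0:ℝ) T := ⟨le_rfl, hT.le⟩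
  have hK0 : 0 ≤ K := le_trans (norm_nonneg _) (hK 0 h0T)
  obtain ⟨MS, hMS⟩ := isCompact_Icc.exists_bound_of_continuousOn hScont
  have hMS0 : 0 ≤ MS := le_trans (norm_nonneg _) (hMS 0 h0T)
  have hUC := Metric.uniformContinuousOn_iff.mp
    (isCompact_Icc.uniformContinuousOn_of_continuous hVcont)
  have hfinsub : ∀ A B : ℝ, 0 ≤ A → B ≤ T → eVariationOn S (Icc A B) ≠ ⊤ := by
    intro A B h1 h2 h3
    exact hSBV (top_le_iff.mp (h3 ▸ eVariationOn.mono S (Icc_subset_Icc h1 h2)))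
  have hmain : ∀ t ∈ Icc (0:ℝ) T, S t = 0 := by
    by_contra hcon
    push_neg at hcon
    obtain ⟨t, htI, htS⟩ := hcon
    -- the last zero of S before t
    set Zset : Set ℝ := Icc 0 t ∩ S ⁻¹' {0} with hZset
    have hZclosed : IsClosed Zset :=
      (hScont.mono (Icc_subset_Icc le_rfl htI.2)).preimage_isClosed_of_isClosed
        isClosed_Icc isClosed_singleton
    have hZne : Zset.Nonempty := ⟨0, ⟨le_rfl, htI.1⟩, by simp [hS0]⟩
    have hZbdd : BddAbove Zset := ⟨t, fun z hz => hz.1.2⟩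
    set t₀ := sSup Zset with ht₀def
    have ht₀ : t₀ ∈ Zset := hZclosed.csSup_mem hZne hZbdd
    have hSt₀ : S t₀ = 0 := ht₀.2
    have ht₀0 : 0 ≤ t₀ := ht₀.1.1
    have ht₀t : t₀ ≤ t := ht₀.1.2
    have ht₀lt : t₀ < t := lt_of_le_of_ne ht₀t (fun h => htS (h ▸ hSt₀))
    have ht₀I : t₀ ∈ Icc (0:ℝ) T := ⟨ht₀0, le_trans ht₀t htI.2⟩
    have hne : ∀ s, t₀ < s → s ≤ t → S s ≠ 0 := by
      intro s h1 h2 hs0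
      have : s ∈ Zset := ⟨⟨le_trans ht₀0 h1.le, h2⟩, by simp [hs0]⟩
      exact absurd (le_csSup hZbdd this) (not_le.mpr h1)
    -- the exponential formula
    have hexp : ∀ x, t₀ < x → x ≤ t → S t = S x * Complex.exp (V t - V x) := by
      intro x hx1 hx2
      have hx0 : 0 ≤ x := le_trans ht₀0 hx1.le
      have hsub : Icc x t ⊆ Icc (0:ℝ) T := Icc_subset_Icc hx0 htI.2
      obtain ⟨z, hz, hzmin'⟩ := isCompact_Icc.exists_isMinOn (nonempty_Icc.mpr hx2)
        ((hScont.mono hsub).norm)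
      have hzmin : ∀ y ∈ Icc x t, ‖S z‖ ≤ ‖S y‖ := fun y hy => hzmin' hy
      set m := ‖S z‖ with hm
      have hm0 : 0 < m := by
        rw [hm, norm_pos_iff]
        exact hne z (lt_of_lt_of_le hx1 hz.1) hz.2
      set c0 : ℝ := Real.exp K * (1 + MS * (1 + 2 * K) / m) with hc0
      have hc0pos : 0 < c0 := by positivity
      set vXT := (eVariationOn S (Icc x t)).toReal with hvXT
      have hvXT0 : 0 ≤ vXT := ENNReal.toReal_nonneg
      have hkey : ∀ η : ℝ, 0 < η → η ≤ 1 →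
          ‖S t * Complex.exp (-V t) - S x * Complex.exp (-V x)‖ ≤ η * (c0 * vXT) := by
        intro η hη hη1
        obtain ⟨δη, hδη, hδV⟩ := hUC η hη
        set k : ℕ := ⌈(t - x) / δη⌉₊ + 1 with hk
        have hk0 : (0:ℝ) < k := by exact_mod_cast Nat.succ_pos _
        have hkstep : (t - x) / k < δη := by
          rw [div_lt_iff₀ hk0]
          have h1 : (t - x) / δη < k := by
            have := Nat.le_ceil ((t - x) / δη)
            have h2 : (⌈(t - x) / δη⌉₊ : ℝ) < k := by exact_mod_cast Nat.lt_succ_self _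
            linarith
          calc t - x = ((t - x) / δη) * δη := by field_simp
          _ < k * δη := mul_lt_mul_of_pos_right h1 hδη
          _ = δη * k := by ring
        set st : ℕ → ℝ := fun j => x + (min j k : ℕ) * ((t - x) / k) with hst
        have hstep0 : 0 ≤ (t - x) / k := div_nonneg (by linarith) hk0.le
        have hsmono : Monotone st := by
          apply monotone_nat_of_le_succ
          intro j
          have hc : ((min j k : ℕ) : ℝ) ≤ ((min (j + 1) k : ℕ) : ℝ) := by
            exact_mod_cast min_le_min (Nat.le_succ j) (le_refl k)
          simp only [hst]
          nlinarith
        have hst0 : st 0 = x := by simp [hst]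
        have hstk : st k = t := by
          simp only [hst, min_self]
          field_simp
          ring
        have hub : ∀ j, st j ≤ t := by
          intro j
          have hmm : st j = st (min j k) := by
            simp only [hst, min_assoc, min_self]
          rw [hmm, ← hstk]
          exact hsmono (min_le_right j k)
        have hstmem : ∀ j, st j ∈ Icc x t := by
          intro j
          refine ⟨?_, hub j⟩
          rw [← hst0]
          exact hsmono (Nat.zero_le j)
        have hstep_le : ∀ j, j < k → st (j + 1) - st j ≤ (t - x) / k := by
          intro j hj
          have heqs : st (j + 1) - st j = (t - x) / k := by
            simp only [hst]
            rw [min_eq_left (by omega), min_eq_left (by omega)]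
            push_cast
            ring
          exact le_of_eq heqs
        have hdistV : ∀ A B : ℝ, A ∈ Icc (0:ℝ) T → B ∈ Icc (0:ℝ) T → |A - B| < δη →
            ‖V A - V B‖ ≤ η := by
          intro A B hA hB hd
          have := hδV A hA B hB (by rwa [Real.dist_eq])
          rw [dist_eq_norm] at this
          exact this.le
        have hj : ∀ j, j < k →
            ‖S (st (j + 1)) * Complex.exp (-V (st (j + 1)))
              - S (st j) * Complex.exp (-V (st j))‖
            ≤ η * (c0 * (eVariationOn S (Icc (st j) (st (j + 1)))).toReal) := by
          intro j hjk
          set A := st j with hA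
          set B := st (j + 1) with hB
          have hAB : A ≤ B := hsmono (Nat.le_succ j)
          have hAmem : A ∈ Icc x t := hstmem j
          have hBmem : B ∈ Icc x t := hstmem (j + 1)
          have hA0 : 0 ≤ A := le_trans hx0 hAmem.1
          have hBT : B ≤ T := le_trans hBmem.2 htI.2
          have hABod : ∀ σ, σ ∈ Icc A B → σ ∈ Icc (0:ℝ) T :=
            fun σ hσ => ⟨le_trans hA0 hσ.1, le_trans hσ.2 hBT⟩
          set vj := (eVariationOn S (Icc A B)).toReal with hvj
          have hvj0 : 0 ≤ vj := ENNReal.toReal_nonneg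
          set w := V B - V A with hw
          have hBA : B - A ≤ (t - x) / k := hstep_le j hjk
          have hi1 : ‖(S B - S A) - S A * w‖ ≤ η * vj := by
            apply RS_star T S V hSBV heq hA0 hAB hBT hη.le
            intro σ hσ
            apply hdistV σ B (hABod σ hσ) (hABod B ⟨hAB, le_rfl⟩)
            rw [abs_of_nonpos (by linarith [hσ.2])]
            have h2 : B - σ ≤ B - A := by linarith [hσ.1]
            calc -(σ - B) = B - σ := by ring
            _ ≤ B - A := h2
            _ ≤ (t - x) / k := hBA
            _ < δη := hkstep
          have hwη : ‖w‖ ≤ η := by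
            rw [hw, norm_sub_rev]
            apply hdistV A B (hABod A ⟨le_rfl, hAB⟩) (hABod B ⟨hAB, le_rfl⟩)
            rw [abs_of_nonpos (by linarith)]
            calc -(A - B) = B - A := by ring
            _ ≤ (t - x) / k := hBA
            _ < δη := hkstep
          have hi2 : m * ‖w‖ ≤ (1 + 2 * K) * vj := by
            have h2K : ‖(S B - S A) - S A * w‖ ≤ (2 * K) * vj := by
              apply RS_star T S V hSBV heq hA0 hAB hBT (by linarith)
              intro σ hσ
              calc ‖V σ - V B‖ ≤ ‖V σ‖ + ‖V B‖ := norm_sub_le _ _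
              _ ≤ K + K := add_le_add (hK σ (hABod σ hσ)) (hK B (hABod B ⟨hAB, le_rfl⟩))
              _ = 2 * K := by ring
            have hSBA : ‖S B - S A‖ ≤ vj := norm_sub_le_var S hAB (hfinsub A B hA0 hBT)
            have hmA : m ≤ ‖S A‖ := hzmin A hAmem
            have h3 : ‖S A * w‖ ≤ ‖S B - S A‖ + (2 * K) * vj := by
              have hrw : S A * w = (S B - S A) - ((S B - S A) - S A * w) := by ring
              rw [hrw]
              exact le_trans (norm_sub_le _ _) (by linarith)
            calc m * ‖w‖ ≤ ‖S A‖ * ‖w‖ := mul_le_mul_of_nonneg_right hmA (norm_nonneg _)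
            _ = ‖S A * w‖ := (norm_mul _ _).symm
            _ ≤ vj + 2 * K * vj := by linarith
            _ = (1 + 2 * K) * vj := by ring
          have hexpw : ‖Complex.exp w - 1 - w‖ ≤ ‖w‖ ^ 2 := by
            have h1 : ‖w‖ ≤ 1 := by
              linarith
            have := Complex.norm_exp_sub_one_sub_id_le h1
            exact this
          have hexpB : ‖Complex.exp (-V B)‖ ≤ Real.exp K := by
            rw [Complex.norm_exp]
            apply Real.exp_le_exp.mpr
            have h2 : ‖V B‖ ≤ K := by
              exact hK B (hABod B ⟨hAB, le_rfl⟩)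
            have h3 := abs_le.mp (le_trans (Complex.abs_re_le_norm (V B)) h2)
            simp only [Complex.neg_re]
            linarith [h3.1]
          have hee : Complex.exp (-V B) * Complex.exp w = Complex.exp (-V A) := by
            rw [← Complex.exp_add]
            congr 1
            rw [hw]; ring
          have hid : S B * Complex.exp (-V B) - S A * Complex.exp (-V A)
              = Complex.exp (-V B) * (S B - S A * Complex.exp w) := by
            rw [← hee]; ring
          have hid2 : S B - S A * Complex.exp w
              = ((S B - S A) - S A * w) - S A * (Complex.exp w - 1 - w) := by ring
          have hSA : ‖S A‖ ≤ MS := hMS A (hABod A ⟨le_rfl, hAB⟩)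
          have hw2 : ‖w‖ ^ 2 ≤ η * ((1 + 2 * K) * vj / m) := by
            have h1 : ‖w‖ ≤ (1 + 2 * K) * vj / m := by
              rw [le_div_iff₀ hm0]
              calc ‖w‖ * m = m * ‖w‖ := by ring
              _ ≤ (1 + 2 * K) * vj := hi2
            calc ‖w‖ ^ 2 = ‖w‖ * ‖w‖ := sq ‖w‖
            _ ≤ η * ((1 + 2 * K) * vj / m) :=
              mul_le_mul hwη h1 (norm_nonneg _) hη.le
          calc ‖S B * Complex.exp (-V B) - S A * Complex.exp (-V A)‖
              = ‖Complex.exp (-V B)‖ * ‖S B - S A * Complex.exp w‖ := by rw [hid, norm_mul]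
          _ ≤ Real.exp K * (η * vj + MS * (η * ((1 + 2 * K) * vj / m))) := by
              apply mul_le_mul hexpB ?_ (norm_nonneg _) (Real.exp_pos K).le
              rw [hid2]
              refine le_trans (norm_sub_le _ _) ?_
              apply add_le_add hi1
              rw [norm_mul]
              calc ‖S A‖ * ‖Complex.exp w - 1 - w‖ ≤ MS * ‖w‖ ^ 2 :=
                mul_le_mul hSA hexpw (norm_nonneg _) hMS0
              _ ≤ MS * (η * ((1 + 2 * K) * vj / m)) := mul_le_mul_of_nonneg_left hw2 hMS0
          _ = η * (c0 * vj) := by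
              rw [hc0]
              field_simp
        -- sum up
        have htel : S t * Complex.exp (-V t) - S x * Complex.exp (-V x)
            = ∑ j ∈ Finset.range k, (S (st (j + 1)) * Complex.exp (-V (st (j + 1)))
              - S (st j) * Complex.exp (-V (st j))) := by
          rw [Finset.sum_range_sub (fun j => S (st j) * Complex.exp (-V (st j))) k, hst0, hstk]
        rw [htel]
        have hsumv : ∑ j ∈ Finset.range k, (eVariationOn S (Icc (st j) (st (j + 1)))).toReal
            = vXT := by
          have hfin : ∀ j ∈ Finset.range k, eVariationOn S (Icc (st j) (st (j + 1))) ≠ ⊤ :=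
            fun j _ => hfinsub _ _ (le_trans hx0 (hstmem j).1) (le_trans (hstmem (j + 1)).2 htI.2)
          rw [← ENNReal.toReal_sum hfin, evar_sum S hsmono k, hst0, hstk]
        calc ‖∑ j ∈ Finset.range k, (S (st (j + 1)) * Complex.exp (-V (st (j + 1)))
            - S (st j) * Complex.exp (-V (st j)))‖
            ≤ ∑ j ∈ Finset.range k, ‖S (st (j + 1)) * Complex.exp (-V (st (j + 1)))
              - S (st j) * Complex.exp (-V (st j))‖ := norm_sum_le _ _
        _ ≤ ∑ j ∈ Finset.range k,
              η * (c0 * (eVariationOn S (Icc (st j) (st (j + 1)))).toReal) :=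
            Finset.sum_le_sum (fun j hj' => hj j (Finset.mem_range.mp hj'))
        _ = η * (c0 * ∑ j ∈ Finset.range k,
              (eVariationOn S (Icc (st j) (st (j + 1)))).toReal) := by
            rw [Finset.mul_sum, Finset.mul_sum]
        _ = η * (c0 * vXT) := by rw [hsumv]
      -- from hkey: the difference is 0
      have hE0 : S t * Complex.exp (-V t) - S x * Complex.exp (-V x) = 0 := by
        by_contra hE
        set E := S t * Complex.exp (-V t) - S x * Complex.exp (-V x) with hEdef
        have hpos : 0 < ‖E‖ := norm_pos_iff.mpr hE
        set η := min 1 (‖E‖ / (2 * (c0 * vXT + 1))) with hηdef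
        have hη0 : 0 < η := lt_min one_pos (by positivity)
        have h1 := hkey η hη0 (min_le_left _ _)
        have h2 : η ≤ ‖E‖ / (2 * (c0 * vXT + 1)) := min_le_right _ _
        have h3 : 0 ≤ c0 * vXT := by positivity
        have h4 : 0 < c0 * vXT + 1 := by linarith
        have h5 : η * (c0 * vXT) ≤ (‖E‖ / (2 * (c0 * vXT + 1))) * (c0 * vXT) :=
          mul_le_mul_of_nonneg_right h2 h3
        have h6 : (‖E‖ / (2 * (c0 * vXT + 1))) * (c0 * vXT) < ‖E‖ := by
          rw [div_mul_eq_mul_div, div_lt_iff₀ (by linarith)]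
          nlinarith
        exact absurd h1 (not_le.mpr (lt_of_le_of_lt h5 h6))
      have h1 : Complex.exp (-V t) * Complex.exp (V t) = 1 := by
        rw [← Complex.exp_add]
        simp
      calc S t = S t * (Complex.exp (-V t) * Complex.exp (V t)) := by rw [h1, mul_one]
      _ = (S t * Complex.exp (-V t)) * Complex.exp (V t) := by ring
      _ = (S x * Complex.exp (-V x)) * Complex.exp (V t) := by rw [sub_eq_zero.mp hE0]
      _ = S x * Complex.exp (V t - V x) := by
          rw [mul_assoc, ← Complex.exp_add, show -V x + V t = V t - V x from by ring]
    -- norm bound from the exponential formula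
    have hnorm : ∀ x, t₀ < x → x ≤ t → ‖S t‖ ≤ ‖S x‖ * Real.exp (2 * K) := by
      intro x h1 h2
      have hxI : x ∈ Icc (0:ℝ) T := ⟨le_trans ht₀0 h1.le, le_trans h2 htI.2⟩
      rw [hexp x h1 h2, norm_mul]
      apply mul_le_mul_of_nonneg_left ?_ (norm_nonneg _)
      rw [Complex.norm_exp]
      apply Real.exp_le_exp.mpr
      have e1 : (V t - V x).re ≤ ‖V t - V x‖ := by
        exact le_trans (le_abs_self _) (Complex.abs_re_le_norm _)
      calc (V t - V x).re ≤ ‖V t - V x‖ := e1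
      _ ≤ ‖V t‖ + ‖V x‖ := norm_sub_le _ _
      _ ≤ K + K := add_le_add (hK t htI) (hK x hxI)
      _ = 2 * K := by ring
    -- contradiction via continuity at t₀
    have hcw := hScont t₀ ht₀I
    rw [Metric.continuousWithinAt_iff] at hcw
    have hcontr : ∀ ε : ℝ, 0 < ε → ‖S t‖ < ε * Real.exp (2 * K) := by
      intro ε hε
      obtain ⟨δ, hδ0, hδ⟩ := hcw ε hε
      set x := min t (t₀ + δ / 2) with hxdef
      have hx1 : t₀ < x := lt_min ht₀lt (by linarith)
      have hx2 : x ≤ t := min_le_left _ _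
      have hxI : x ∈ Icc (0:ℝ) T := ⟨le_trans ht₀0 hx1.le, le_trans hx2 htI.2⟩
      have hdx : dist x t₀ < δ := by
        rw [Real.dist_eq, abs_of_nonneg (by linarith)]
        have : x ≤ t₀ + δ / 2 := min_le_right _ _
        linarith
      have hSx : ‖S x‖ < ε := by
        have := hδ hxI hdx
        rwa [dist_eq_norm, hSt₀, sub_zero] at this
      calc ‖S t‖ ≤ ‖S x‖ * Real.exp (2 * K) := hnorm x hx1 hx2
      _ < ε * Real.exp (2 * K) := mul_lt_mul_of_pos_right hSx (Real.exp_pos _)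
    have hpos : 0 < ‖S t‖ := norm_pos_iff.mpr htS
    have hfin := hcontr (‖S t‖ / (2 * Real.exp (2 * K))) (by positivity)
    have hEx := Real.exp_pos (2 * K)
    have heq2 : (‖S t‖ / (2 * Real.exp (2 * K))) * Real.exp (2 * K) = ‖S t‖ / 2 := by
      field_simp
    rw [heq2] at hfin
    linarith
  constructor
  · ext s
    constructor
    · exact fun h => h.1
    · exact fun h => ⟨h, hmain s h⟩
  · intro a b haI hbI hab hSa u hu
    exact hmain u ⟨le_trans haI.1 hu.1, le_trans hu.2 hbI.2⟩
end

section
/- Let F : ℍ → ℍ be holomorphic and uniformly bounded, and U : [0,∞) → ℝ continuous. Then for every z ∈ ℍ and s ≥ 0, the solution Z of Z_t = z + ∫ₛᵗ F(Z_r)dr + U_t − U_s exists (and is unique) for all t ≥ s; i.e. the solution does not blow up in finite time. -/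
open Set MeasureTheory intervalIntegral

private lemma lip_proj (e : ℝ) :
    LipschitzWith 1 (fun w : ℂ => (⟨w.re, max w.im e⟩ : ℂ)) := by
  apply LipschitzWith.of_dist_le_mul
  intro x y
  rw [NNReal.coe_one, one_mul, Complex.dist_eq_re_im, Complex.dist_eq_re_im]
  apply Real.sqrt_le_sqrt
  have h1 : |max x.im e - max y.im e| ≤ |x.im - y.im| := abs_max_sub_max_le_abs _ _ _
  have h2 : (max x.im e - max y.im e) ^ 2 ≤ (x.im - y.im) ^ 2 := by
    rw [← sq_abs, ← sq_abs (x.im - y.im)]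
    exact pow_le_pow_left₀ (abs_nonneg _) h1 2
  show (x.re - y.re) ^ 2 + (max x.im e - max y.im e) ^ 2 ≤ _
  nlinarith [h2]

/-- Let `F : ℍ → ℍ` be holomorphic and uniformly bounded, and `U : [0,∞) → ℝ` continuous.
Then for every `z ∈ ℍ` and `s ≥ 0` there is a global-in-time solution of
`Z t = z + ∫ₛᵗ F (Z r) dr + U t − U s` staying in `ℍ`, and it is unique (no blow-up in
finite time). -/
theorem stmt6 (F : ℂ → ℂ)
    (hF : DifferentiableOn ℂ F {w : ℂ | 0 < w.im})
    (hmap : MapsTo F {w : ℂ | 0 < w.im} {w : ℂ | 0 < w.im})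
    (C : ℝ) (hbdd : ∀ w ∈ {w : ℂ | 0 < w.im}, ‖F w‖ ≤ C)
    (U : ℝ → ℝ) (hU : Continuous U)
    (s : ℝ) (hs : 0 ≤ s) (z : ℂ) (hz : 0 < z.im) :
    (∃ Z : ℝ → ℂ, ContinuousOn Z (Ici s) ∧ (∀ t ∈ Ici s, 0 < (Z t).im) ∧
        ∀ t ∈ Ici s, Z t = z + (∫ r in s..t, F (Z r)) + (((U t - U s : ℝ)) : ℂ)) ∧
      ∀ Z₁ Z₂ : ℝ → ℂ,
        (ContinuousOn Z₁ (Ici s) ∧ (∀ t ∈ Ici s, 0 < (Z₁ t).im) ∧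
          ∀ t ∈ Ici s, Z₁ t = z + (∫ r in s..t, F (Z₁ r)) + (((U t - U s : ℝ)) : ℂ)) →
        (ContinuousOn Z₂ (Ici s) ∧ (∀ t ∈ Ici s, 0 < (Z₂ t).im) ∧
          ∀ t ∈ Ici s, Z₂ t = z + (∫ r in s..t, F (Z₂ r)) + (((U t - U s : ℝ)) : ℂ)) →
        EqOn Z₁ Z₂ (Ici s) := by
  have hC0 : 0 ≤ C := le_trans (norm_nonneg _) (hbdd z hz)
  set e := z.im with he
  have he0 : 0 < e := hz
  -- the 1-Lipschitz projection onto the closed half-plane {im ≥ e}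
  set p : ℂ → ℂ := fun w => (⟨w.re, max w.im e⟩ : ℂ) with hp
  have hpim : ∀ w, e ≤ (p w).im := fun w => le_max_right _ _
  have hpH : ∀ w : ℂ, p w ∈ {w : ℂ | 0 < w.im} := fun w => lt_of_lt_of_le he0 (hpim w)
  have hpfix : ∀ w : ℂ, e ≤ w.im → p w = w := fun w hw => Complex.ext rfl (max_eq_left hw)
  have hplip : LipschitzWith 1 p := lip_proj e
  -- F is Lipschitz on {im > e/2}
  have hH : IsOpen {w : ℂ | 0 < w.im} := isOpen_Ioi.preimage Complex.continuous_im
  have hSH : {w : ℂ | e / 2 < w.im} ⊆ {w : ℂ | 0 < w.im} := fun w hw => by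
    simp only [mem_setOf_eq] at *; linarith
  have hdiff : ∀ w ∈ {w : ℂ | e / 2 < w.im}, DifferentiableAt ℂ F w := fun w hw =>
    hF.differentiableAt (hH.mem_nhds (hSH hw))
  set K : NNReal := Real.toNNReal ((2 * C + 1) / (e / 2)) with hK
  have hbound : ∀ c ∈ {w : ℂ | e / 2 < w.im}, ‖deriv F c‖ ≤ (2 * C + 1) / (e / 2) := by
    intro c hc
    have hc2 : e / 2 < c.im := hc
    have hc0 : 0 < c.im := hSH hc
    have hball : Metric.ball c c.im ⊆ {w : ℂ | 0 < w.im} := by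
      intro w hw
      have h3 : |(w - c).im| ≤ dist w c := by
        rw [Complex.dist_eq]; exact Complex.abs_im_le_norm _
      simp only [Complex.sub_im] at h3
      have h4 := (abs_le.1 h3).1
      have hd : dist w c < c.im := hw
      simp only [mem_setOf_eq]
      linarith
    have hmaps : MapsTo F (Metric.ball c c.im) (Metric.ball (F c) (2 * C + 1)) := by
      intro w hw
      have h1 : ‖F w‖ ≤ C := hbdd _ (hball hw)
      have h2 : ‖F c‖ ≤ C := hbdd _ (hball (Metric.mem_ball_self hc0))
      have h5 : dist (F w) (F c) ≤ 2 * C := by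
        rw [dist_eq_norm]
        calc ‖F w - F c‖ ≤ ‖F w‖ + ‖F c‖ := norm_sub_le _ _
          _ ≤ 2 * C := by linarith
      exact lt_of_le_of_lt h5 (by linarith)
    have h6 := Complex.norm_deriv_le_div_of_mapsTo_ball (hF.mono hball) (hmaps.mono_right Metric.ball_subset_closedBall) hc0
    refine h6.trans ?_
    gcongr <;> linarith
  have hFlipS : LipschitzOnWith K F {w : ℂ | e / 2 < w.im} := by
    apply Convex.lipschitzOnWith_of_nnnorm_deriv_le hdiff ?_ (convex_halfSpace_im_gt _)
    intro x hx
    rw [← NNReal.coe_le_coe, coe_nnnorm, hK,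
      Real.coe_toNNReal _ (div_nonneg (by linarith) (by linarith))]
    exact hbound x hx
  -- the regularized vector field
  set G : ℂ → ℂ := fun w => F (p w) with hG
  have hpS : ∀ w : ℂ, p w ∈ {w : ℂ | e / 2 < w.im} := fun w =>
    lt_of_lt_of_le (by simpa using half_lt_self he0) (hpim w)
  have hGlip : LipschitzWith K G := by
    apply LipschitzWith.of_dist_le_mul
    intro x y
    calc dist (G x) (G y) ≤ K * dist (p x) (p y) := hFlipS.dist_le_mul _ (hpS x) _ (hpS y)
      _ ≤ K * dist x y := by
          have h7 := hplip.dist_le_mul x y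
          rw [NNReal.coe_one, one_mul] at h7
          exact mul_le_mul_of_nonneg_left h7 K.coe_nonneg
  have hGcont : Continuous G := hGlip.continuous
  have hGnorm : ∀ w, ‖G w‖ ≤ C := fun w => hbdd _ (hpH w)
  have hGim : ∀ w, 0 < (G w).im := fun w => hmap (hpH w)
  -- the driving term
  set sh : ℝ → ℂ := fun t => ((U t - U s : ℝ) : ℂ) with hsh
  have hshc : Continuous sh := Complex.continuous_ofReal.comp (hU.sub continuous_const)
  have hsh0 : sh s = 0 := by simp [hsh]
  have hshim : ∀ t, (sh t).im = 0 := fun t => Complex.ofReal_im _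
  -- the non-autonomous field
  set V : ℝ → ℂ → ℂ := fun t w => G (w + sh t) with hV
  have hVlip : ∀ t, LipschitzWith K (V t) := by
    intro t
    apply LipschitzWith.of_dist_le_mul
    intro x y
    have h8 := hGlip.dist_le_mul (x + sh t) (y + sh t)
    rwa [dist_add_right] at h8
  -- local solutions on [s, s+n+1]
  have sol : ∀ n : ℕ, ∃ f : ℝ → ℂ, f s = z ∧ ∀ t ∈ Icc s (s + n + 1),
      HasDerivWithinAt f (V t (f t)) (Icc s (s + n + 1)) t := by
    intro n
    have hn : (0 : ℝ) ≤ n := Nat.cast_nonneg n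
    have hR : (0 : ℝ) ≤ C * (n + 1) := mul_nonneg hC0 (by linarith)
    have hpl : IsPicardLindelof V (tmin := s) (tmax := s + n + 1) ⟨s, le_refl s, by linarith⟩ z
        (C * (n + 1)).toNNReal 0 C.toNNReal K :=
      { lipschitzOnWith := fun t _ => (hVlip t).lipschitzOnWith
        continuousOn := fun x _ => (hGcont.comp (continuous_const.add hshc)).continuousOn
        norm_le := fun t _ x _ => by rw [Real.coe_toNNReal _ hC0]; exact hGnorm _
        mul_max_le := by
          rw [Real.coe_toNNReal _ hC0, Real.coe_toNNReal _ hR, NNReal.coe_zero, sub_zero]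
          show C * max (s + n + 1 - s) (s - s) ≤ C * (n + 1)
          have h9 : s + n + 1 - s = (n : ℝ) + 1 := by ring
          rw [h9, sub_self, max_eq_left (by linarith)] }
    exact hpl.exists_eq_forall_mem_Icc_hasDerivWithinAt₀
  choose f hf0 hfD using sol
  have fcont : ∀ n : ℕ, ContinuousOn (f n) (Icc s (s + n + 1)) := fun n t ht =>
    (hfD n t ht).continuousWithinAt
  have fIci : ∀ n : ℕ, ∀ t ∈ Ico s (s + n + 1), HasDerivWithinAt (f n) (V t (f n t)) (Ici t) t :=
    fun n t ht => (hfD n t ⟨ht.1, ht.2.le⟩).mono_of_mem_nhdsWithin (Icc_mem_nhdsGE_of_mem ht)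
  have agree : ∀ m n : ℕ, m ≤ n → EqOn (f m) (f n) (Icc s (s + m + 1)) := by
    intro m n hmn
    have hmn' : s + (m : ℝ) + 1 ≤ s + n + 1 := by
      have : (m : ℝ) ≤ n := Nat.cast_le.2 hmn
      linarith
    exact ODE_solution_unique hVlip (fcont m) (fIci m)
      ((fcont n).mono (Icc_subset_Icc_right hmn'))
      (fun t ht => fIci n t ⟨ht.1, lt_of_lt_of_le ht.2 hmn'⟩)
      (by rw [hf0 m, hf0 n])
  have agree' : ∀ m n : ℕ, ∀ t, t ∈ Icc s (s + m + 1) → t ∈ Icc s (s + n + 1) →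
      f m t = f n t := by
    intro m n t h1 h2
    rcases le_total m n with h | h
    · exact agree m n h h1
    · exact (agree n m h h2).symm
  set W : ℝ → ℂ := fun t => f ⌈t - s⌉₊ t with hWdef
  have hmemN : ∀ t, s ≤ t → t ∈ Icc s (s + ⌈t - s⌉₊ + 1) ∧ t < s + ⌈t - s⌉₊ + 1 := by
    intro t ht
    have h1 : t - s ≤ ⌈t - s⌉₊ := Nat.le_ceil _
    exact ⟨⟨ht, by linarith⟩, by linarith⟩
  have hWeq : ∀ n : ℕ, EqOn W (f n) (Icc s (s + n + 1)) := fun n t ht =>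
    agree' _ n t (hmemN t ht.1).1 ht
  have hnhd : ∀ {t T : ℝ}, s ≤ t → t < T → Icc s T ∈ nhdsWithin t (Ici s) := by
    intro t T h1 h2
    rw [mem_nhdsWithin]
    exact ⟨Iio T, isOpen_Iio, h2, fun y hy => ⟨hy.2, hy.1.le⟩⟩
  have hWcont : ContinuousOn W (Ici s) := by
    intro t ht
    obtain ⟨hmem, hlt⟩ := hmemN t ht
    have hN : Icc s (s + ⌈t - s⌉₊ + 1) ∈ nhdsWithin t (Ici s) := hnhd ht hlt
    have h1 : ContinuousWithinAt (f ⌈t - s⌉₊) (Ici s) t :=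
      (fcont _ t hmem).mono_of_mem_nhdsWithin hN
    exact h1.congr_of_eventuallyEq
      (Filter.eventually_of_mem hN fun y hy => hWeq _ hy) (hWeq _ hmem)
  have hWint : ∀ t, t ∈ Ici s → W t = z + ∫ r in s..t, V r (W r) := by
    intro t ht
    obtain ⟨hmem, hlt⟩ := hmemN t ht
    set n : ℕ := ⌈t - s⌉₊ with hn
    have key : ∫ r in s..t, V r (f n r) = f n t - f n s := by
      apply integral_eq_sub_of_hasDeriv_right_of_le ht
      · exact (fcont n).mono (Icc_subset_Icc_right hmem.2)
      · intro x hx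
        exact ((hfD n x ⟨hx.1.le, (hx.2.trans hlt).le⟩).hasDerivAt
          (Icc_mem_nhds hx.1 (hx.2.trans hlt))).hasDerivWithinAt
      · apply ContinuousOn.intervalIntegrable
        rw [uIcc_of_le ht]
        exact hGcont.comp_continuousOn
          ((((fcont n).mono (Icc_subset_Icc_right hmem.2))).add hshc.continuousOn)
    have congr1 : ∫ r in s..t, V r (W r) = ∫ r in s..t, V r (f n r) := by
      apply intervalIntegral.integral_congr
      intro r hr
      rw [uIcc_of_le ht] at hr
      exact congrArg (V r) (hWeq n ⟨hr.1, hr.2.trans hmem.2⟩)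
    rw [hWeq n hmem, congr1, key, hf0]
    ring
  -- the candidate solution
  set Z : ℝ → ℂ := fun t => W t + sh t with hZdef
  have hVWcont : ContinuousOn (fun r => V r (W r)) (Ici s) :=
    hGcont.comp_continuousOn (hWcont.add hshc.continuousOn)
  have hZim : ∀ t ∈ Ici s, e ≤ (Z t).im := by
    intro t ht
    have hint : IntervalIntegrable (fun r => V r (W r)) volume s t := by
      apply ContinuousOn.intervalIntegrable
      exact hVWcont.mono (by rw [uIcc_of_le ht]; exact fun y hy => hy.1)
    have him2 := Complex.imCLM.intervalIntegral_comp_comm hint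
    simp only [Complex.imCLM_apply] at him2
    have hpos2 : 0 ≤ ∫ r in s..t, (V r (W r)).im :=
      intervalIntegral.integral_nonneg ht fun u _ => (hGim _).le
    have himZ : (Z t).im = z.im + (∫ r in s..t, V r (W r)).im + (sh t).im := by
      rw [hZdef]
      simp only [hWint t ht, Complex.add_im]
    rw [hshim, ← him2] at himZ
    rw [← he] at himZ
    linarith
  have hZF : ∀ t ∈ Ici s, V t (W t) = F (Z t) := by
    intro t ht
    have h1 : p (Z t) = Z t := hpfix _ (hZim t ht)
    calc V t (W t) = G (Z t) := rfl
      _ = F (p (Z t)) := rfl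
      _ = F (Z t) := by rw [h1]
  constructor
  · refine ⟨Z, hWcont.add hshc.continuousOn, fun t ht => lt_of_lt_of_le he0 (hZim t ht), ?_⟩
    intro t ht
    have congr2 : ∫ r in s..t, F (Z r) = ∫ r in s..t, V r (W r) := by
      apply intervalIntegral.integral_congr
      intro r hr
      rw [uIcc_of_le ht] at hr
      exact (hZF r hr.1).symm
    rw [congr2]
    show W t + sh t = z + (∫ r in s..t, V r (W r)) + sh t
    rw [hWint t ht]
  -- uniqueness
  · intro Z₁ Z₂ h₁ h₂
    obtain ⟨hc₁, hpos₁, heq₁⟩ := h₁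
    obtain ⟨hc₂, hpos₂, heq₂⟩ := h₂
    have conv : ∀ Y : ℝ → ℂ, ContinuousOn Y (Ici s) → (∀ t ∈ Ici s, 0 < (Y t).im) →
        (∀ t ∈ Ici s, Y t = z + (∫ r in s..t, F (Y r)) + (((U t - U s : ℝ)) : ℂ)) →
        ∀ t ∈ Ici s, HasDerivWithinAt (fun u => Y u - sh u) (V t (Y t - sh t)) (Ici t) t := by
      intro Y hc hpos heq
      set Yc : ℝ → ℂ := fun r => Y (max r s) with hYc
      have hYcc : Continuous Yc :=
        hc.comp_continuous (continuous_id.max continuous_const) fun x => mem_Ici.2 (le_max_right _ _)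
      have hYceq : ∀ r, s ≤ r → Yc r = Y r := fun r hr => congrArg Y (max_eq_left hr)
      have hYcH : ∀ r, Yc r ∈ {w : ℂ | 0 < w.im} := fun r => hpos _ (mem_Ici.2 (le_max_right _ _))
      set h : ℝ → ℂ := fun r => F (Yc r) with hh
      have hhc : Continuous h := hF.continuousOn.comp_continuous hYcc hYcH
      have heq' : ∀ t ∈ Ici s, Y t = z + (∫ r in s..t, h r) + sh t := by
        intro t ht
        rw [heq t ht]
        have congr3 : ∫ r in s..t, F (Y r) = ∫ r in s..t, h r := by
          apply intervalIntegral.integral_congr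
          intro r hr
          rw [uIcc_of_le ht] at hr
          exact congrArg F (hYceq r hr.1).symm
        rw [congr3]
      have him : ∀ t ∈ Ici s, e ≤ (Y t).im := by
        intro t ht
        have hint : IntervalIntegrable h volume s t := hhc.intervalIntegrable s t
        have him2 := Complex.imCLM.intervalIntegral_comp_comm hint
        simp only [Complex.imCLM_apply] at him2
        have hpos2 : 0 ≤ ∫ r in s..t, (h r).im :=
          intervalIntegral.integral_nonneg ht fun u _ => (hmap (hYcH u)).le
        have himY : (Y t).im = z.im + (∫ r in s..t, h r).im + (sh t).im := by
          rw [heq' t ht]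
          simp only [Complex.add_im]
        rw [hshim, ← him2, ← he] at himY
        linarith
      intro t ht
      have hWeq2 : ∀ u ∈ Ici t, Y u - sh u = z + ∫ r in s..u, h r := by
        intro u hu
        rw [heq' u (mem_Ici.2 (le_trans ht hu))]
        ring
      have hd : HasDerivAt (fun u => z + ∫ r in s..u, h r) (h t) t := by
        have h10 := intervalIntegral.integral_hasDerivAt_right (hhc.intervalIntegrable s t)
          (hhc.stronglyMeasurableAtFilter volume (nhds t)) hhc.continuousAt
        exact h10.const_add z
      have hfinal := hd.hasDerivWithinAt.congr hWeq2 (hWeq2 t Set.self_mem_Ici)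
      have hid : h t = V t (Y t - sh t) := by
        have h11 : Y t - sh t + sh t = Y t := by ring
        calc h t = F (Y t) := congrArg F (hYceq t ht)
          _ = F (p (Y t)) := by rw [hpfix _ (him t ht)]
          _ = G (Y t) := rfl
          _ = V t (Y t - sh t) := by rw [hV]; simp only []; rw [h11]
      rwa [hid] at hfinal
    have hD₁ := conv Z₁ hc₁ hpos₁ heq₁
    have hD₂ := conv Z₂ hc₂ hpos₂ heq₂
    intro t ht
    have hinit : Z₁ s - sh s = Z₂ s - sh s := by
      rw [heq₁ s Set.self_mem_Ici, heq₂ s Set.self_mem_Ici]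
      simp [intervalIntegral.integral_same]
    have hun := ODE_solution_unique (a := s) (b := t) hVlip
      ((hc₁.mono Icc_subset_Ici_self).sub hshc.continuousOn)
      (fun r hr => hD₁ r hr.1)
      ((hc₂.mono Icc_subset_Ici_self).sub hshc.continuousOn)
      (fun r hr => hD₂ r hr.1)
      hinit
    have h12 := hun ⟨ht, le_refl t⟩
    exact sub_left_inj.mp h12
end

section
/- Let F : ℍ → ℍ be holomorphic and U : [0,∞) → ℝ be continuous, and suppose the flow φ(s,t,·) of dZ = F(Z)dt + dU is globally defined on ℍ for all 0 ≤ s ≤ t. Then for each fixed (s,t), the map z ↦ φ(s,t,z) is an injective holomorphic function from ℍ to ℍ. -/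
open Set MeasureTheory intervalIntegral Metric Topology Filter

private lemma stmt7_isOpenH : IsOpen {w : ℂ | 0 < w.im} :=
  isOpen_lt continuous_const Complex.continuous_im

/-- FTC helper: one-sided derivatives of a primitive of a function continuous on `Icc s t`. -/
private lemma stmt7_primitive {ψ : ℝ → ℂ} {s t : ℝ}
    (hψ : ContinuousOn ψ (Icc s t)) :
    (∀ x ∈ Ico s t, HasDerivWithinAt (fun r => ∫ u in s..r, ψ u) (ψ x) (Ici x) x) ∧
    (∀ x ∈ Ioc s t, HasDerivWithinAt (fun r => ∫ u in s..r, ψ u) (ψ x) (Iic x) x) := by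
  have hmeas : AEStronglyMeasurable ψ (volume.restrict (Icc s t)) :=
    hψ.aestronglyMeasurable measurableSet_Icc
  have hint : ∀ x ∈ Icc s t, IntervalIntegrable ψ volume s x := by
    intro x hx
    have hsub : uIcc s x ⊆ Icc s t := by
      rw [uIcc_of_le hx.1]; exact Icc_subset_Icc le_rfl hx.2
    exact (hψ.mono hsub).intervalIntegrable
  constructor
  · intro x hx
    have h1 : Icc s t ∈ 𝓝[>] x :=
      mem_of_superset (Ioc_mem_nhdsGT_of_mem ⟨le_rfl, hx.2⟩)
        (Ioc_subset_Icc_self.trans (Icc_subset_Icc hx.1 le_rfl))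
    have hm : StronglyMeasurableAtFilter ψ (𝓝[>] x) volume :=
      ⟨Icc s t, h1, hmeas⟩
    have hc : ContinuousWithinAt ψ (Ioi x) x :=
      (hψ x ⟨hx.1, hx.2.le⟩).mono_of_mem_nhdsWithin h1
    exact intervalIntegral.integral_hasDerivWithinAt_right (hint x ⟨hx.1, hx.2.le⟩) hm hc
  · intro x hx
    have h1 : Icc s t ∈ 𝓝[≤] x :=
      Icc_mem_nhdsLE_of_mem hx
    have hm : StronglyMeasurableAtFilter ψ (𝓝[≤] x) volume :=
      ⟨Icc s t, h1, hmeas⟩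
    have hc : ContinuousWithinAt ψ (Iic x) x :=
      (hψ x ⟨hx.1.le, hx.2⟩).mono_of_mem_nhdsWithin h1
    exact intervalIntegral.integral_hasDerivWithinAt_right (hint x ⟨hx.1.le, hx.2⟩) hm hc

/-- Quantitative Lipschitz/Taylor data for a holomorphic `F` near a compact subset of `ℍ`. -/
private lemma stmt7_lipschitz_data (F : ℂ → ℂ)
    (hF : DifferentiableOn ℂ F {w : ℂ | 0 < w.im})
    {C : Set ℂ} (hC : IsCompact C) (hCH : C ⊆ {w : ℂ | 0 < w.im}) :
    ∃ δ : ℝ, 0 < δ ∧ ∃ K : ℝ, 1 ≤ K ∧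
      (∀ a ∈ C, ∀ b ∈ closedBall a δ, ∀ b' ∈ closedBall a δ,
        ‖F b - F b'‖ ≤ K * ‖b - b'‖) ∧
      (∀ a ∈ C, ∀ b ∈ closedBall a δ,
        ‖F b - F a - deriv F a * (b - a)‖ ≤ K * ‖b - a‖ ^ 2) ∧
      (∀ a ∈ C, ‖deriv F a‖ ≤ K) ∧
      (∀ b ∈ C, ∀ b' ∈ C, ‖F b - F b'‖ ≤ K * ‖b - b'‖) := by
  have hH : IsOpen {w : ℂ | 0 < w.im} := stmt7_isOpenH
  have hA : AnalyticOnNhd ℂ F {w : ℂ | 0 < w.im} := hF.analyticOnNhd hH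
  have hA' : AnalyticOnNhd ℂ (deriv F) {w : ℂ | 0 < w.im} := hA.deriv
  have hA'' : AnalyticOnNhd ℂ (deriv (deriv F)) {w : ℂ | 0 < w.im} := hA'.deriv
  obtain ⟨δ, δpos, hδ⟩ := hC.exists_cthickening_subset_open hH hCH
  set C' := cthickening δ C with hC'def
  have hC' : IsCompact C' := hC.cthickening
  have hball : ∀ a ∈ C, closedBall a δ ⊆ C' := fun a ha => closedBall_subset_cthickening ha δ
  obtain ⟨M0, hM0⟩ := hC'.exists_bound_of_continuousOn (hA.continuousOn.mono hδ)
  obtain ⟨M1, hM1⟩ := hC'.exists_bound_of_continuousOn (hA'.continuousOn.mono hδ)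
  obtain ⟨M2, hM2⟩ := hC'.exists_bound_of_continuousOn (hA''.continuousOn.mono hδ)
  set K : ℝ := max 1 (max (max M1 M2) (2 * M0 / δ)) with hKdef
  have hK1 : (1:ℝ) ≤ K := le_max_left _ _
  have hK0 : (0:ℝ) ≤ K := le_trans zero_le_one hK1
  have hKM1 : M1 ≤ K := le_trans (le_trans (le_max_left _ _) (le_max_left _ _)) (le_max_right _ _)
  have hKM2 : M2 ≤ K := le_trans (le_trans (le_max_right _ _) (le_max_left _ _)) (le_max_right _ _)
  have hKM0 : 2 * M0 / δ ≤ K := le_trans (le_max_right _ _) (le_max_right _ _)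
  -- derivative bounds on C'
  have hd1 : ∀ x ∈ C', ‖deriv F x‖ ≤ K := fun x hx => (hM1 x hx).trans hKM1
  have hd2 : ∀ x ∈ C', ‖deriv (deriv F) x‖ ≤ K := fun x hx => (hM2 x hx).trans hKM2
  have hFd : ∀ x ∈ C', HasDerivAt F (deriv F x) x := fun x hx =>
    ((hA x (hδ hx)).differentiableAt).hasDerivAt
  have hFd' : ∀ x ∈ C', HasDerivAt (deriv F) (deriv (deriv F) x) x := fun x hx =>
    ((hA' x (hδ hx)).differentiableAt).hasDerivAt
  -- Lipschitz on balls
  have lipball : ∀ a ∈ C, ∀ b ∈ closedBall a δ, ∀ b' ∈ closedBall a δ,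
      ‖F b - F b'‖ ≤ K * ‖b - b'‖ := by
    intro a ha b hb b' hb'
    have hconv : Convex ℝ (closedBall a δ) := convex_closedBall a δ
    exact Convex.norm_image_sub_le_of_norm_hasDerivWithin_le
      (fun x hx => (hFd x (hball a ha hx)).hasDerivWithinAt)
      (fun x hx => hd1 x (hball a ha hx)) hconv hb' hb
  -- Lipschitz for deriv F on balls
  have lipderiv : ∀ a ∈ C, ∀ b ∈ closedBall a δ, ∀ b' ∈ closedBall a δ,
      ‖deriv F b - deriv F b'‖ ≤ K * ‖b - b'‖ := by
    intro a ha b hb b' hb'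
    exact Convex.norm_image_sub_le_of_norm_hasDerivWithin_le
      (fun x hx => (hFd' x (hball a ha hx)).hasDerivWithinAt)
      (fun x hx => hd2 x (hball a ha hx)) (convex_closedBall a δ) hb' hb
  -- Taylor estimate
  have quad : ∀ a ∈ C, ∀ b ∈ closedBall a δ,
      ‖F b - F a - deriv F a * (b - a)‖ ≤ K * ‖b - a‖ ^ 2 := by
    intro a ha b hb
    have hsub : closedBall a ‖b - a‖ ⊆ closedBall a δ := by
      apply closedBall_subset_closedBall
      simpa [dist_eq_norm] using hb
    have hG : ∀ x ∈ closedBall a ‖b - a‖,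
        HasDerivWithinAt (fun x => F x - deriv F a * x) (deriv F x - deriv F a)
          (closedBall a ‖b - a‖) x := by
      intro x hx
      have := ((hFd x (hball a ha (hsub hx))).sub
        ((hasDerivAt_id x).const_mul (deriv F a))).hasDerivWithinAt
        (s := closedBall a ‖b - a‖)
      simp only [mul_one] at this
      exact this
    have hGb : ∀ x ∈ closedBall a ‖b - a‖, ‖deriv F x - deriv F a‖ ≤ K * ‖b - a‖ := by
      intro x hx
      have := lipderiv a ha x (hsub hx) a (mem_closedBall_self δpos.le)
      refine this.trans ?_
      have : ‖x - a‖ ≤ ‖b - a‖ := by simpa [dist_eq_norm] using hx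
      nlinarith
    have := Convex.norm_image_sub_le_of_norm_hasDerivWithin_le
      hG hGb (convex_closedBall a ‖b - a‖) (mem_closedBall_self (norm_nonneg _))
      (show b ∈ closedBall a ‖b - a‖ by simp [mem_closedBall, dist_eq_norm])
    calc ‖F b - F a - deriv F a * (b - a)‖
        = ‖(F b - deriv F a * b) - (F a - deriv F a * a)‖ := by congr 1; ring
      _ ≤ K * ‖b - a‖ * ‖b - a‖ := this
      _ = K * ‖b - a‖ ^ 2 := by ring
  -- global Lipschitz on C
  have glob : ∀ b ∈ C, ∀ b' ∈ C, ‖F b - F b'‖ ≤ K * ‖b - b'‖ := by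
    intro b hb b' hb'
    rcases le_or_gt ‖b - b'‖ δ with h | h
    · exact lipball b hb b (mem_closedBall_self δpos.le) b'
        (by rw [mem_closedBall, dist_eq_norm, norm_sub_rev]; exact h)
    · have h0 : ‖F b‖ ≤ M0 := hM0 b (self_subset_cthickening C hb)
      have h0' : ‖F b'‖ ≤ M0 := hM0 b' (self_subset_cthickening C hb')
      have : ‖F b - F b'‖ ≤ 2 * M0 := by
        calc ‖F b - F b'‖ ≤ ‖F b‖ + ‖F b'‖ := norm_sub_le _ _
          _ ≤ 2 * M0 := by linarith
      refine this.trans ?_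
      have h2 : 2 * M0 = (2 * M0 / δ) * δ := by field_simp
      rw [h2]
      calc (2 * M0 / δ) * δ ≤ K * δ := by
            apply mul_le_mul_of_nonneg_right hKM0 δpos.le
        _ ≤ K * ‖b - b'‖ := by
            apply mul_le_mul_of_nonneg_left h.le hK0
  exact ⟨δ, δpos, K, hK1, lipball, quad,
    fun a ha => hd1 a (self_subset_cthickening C ha), glob⟩

private lemma stmt7_init (F : ℂ → ℂ) (U : ℝ → ℝ) (φ : ℝ → ℝ → ℂ → ℂ)
    (hφeq : ∀ z ∈ {w : ℂ | 0 < w.im}, ∀ s, 0 ≤ s → ∀ t, s ≤ t →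
      φ s t z = z + (∫ r in s..t, F (φ s r z)) + (((U t - U s : ℝ)) : ℂ))
    {z : ℂ} (hz : z ∈ {w : ℂ | 0 < w.im}) {s : ℝ} (hs : 0 ≤ s) : φ s s z = z := by
  have := hφeq z hz s hs s le_rfl
  simpa [intervalIntegral.integral_same] using this

private lemma stmt7_Dderiv (F : ℂ → ℂ)
    (hF : DifferentiableOn ℂ F {w : ℂ | 0 < w.im})
    (U : ℝ → ℝ) (φ : ℝ → ℝ → ℂ → ℂ)
    (hφmem : ∀ z ∈ {w : ℂ | 0 < w.im}, ∀ s, 0 ≤ s → ∀ t, s ≤ t → 0 < (φ s t z).im)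
    (hφcont : ∀ z ∈ {w : ℂ | 0 < w.im}, ∀ s, 0 ≤ s → ContinuousOn (fun t => φ s t z) (Ici s))
    (hφeq : ∀ z ∈ {w : ℂ | 0 < w.im}, ∀ s, 0 ≤ s → ∀ t, s ≤ t →
      φ s t z = z + (∫ r in s..t, F (φ s r z)) + (((U t - U s : ℝ)) : ℂ))
    {s t : ℝ} (hs : 0 ≤ s) (hst : s ≤ t)
    {z1 z2 : ℂ} (hz1 : z1 ∈ {w : ℂ | 0 < w.im}) (hz2 : z2 ∈ {w : ℂ | 0 < w.im}) :
    (∀ x ∈ Ico s t, HasDerivWithinAt (fun r => φ s r z1 - φ s r z2)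
      (F (φ s x z1) - F (φ s x z2)) (Ici x) x) ∧
    (∀ x ∈ Ioc s t, HasDerivWithinAt (fun r => φ s r z1 - φ s r z2)
      (F (φ s x z1) - F (φ s x z2)) (Iic x) x) := by
  have hFc : ContinuousOn F {w : ℂ | 0 < w.im} := hF.continuousOn
  have hg : ∀ z ∈ {w : ℂ | 0 < w.im}, ContinuousOn (fun r => φ s r z) (Icc s t) :=
    fun z hz => (hφcont z hz s hs).mono Icc_subset_Ici_self
  have hFg : ∀ z ∈ {w : ℂ | 0 < w.im}, ContinuousOn (fun r => F (φ s r z)) (Icc s t) := by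
    intro z hz
    exact hFc.comp (hg z hz) (fun r hr => hφmem z hz s hs r hr.1)
  have hint : ∀ z ∈ {w : ℂ | 0 < w.im}, ∀ r ∈ Icc s t,
      IntervalIntegrable (fun u => F (φ s u z)) volume s r := by
    intro z hz r hr
    have hsub : uIcc s r ⊆ Icc s t := by
      rw [uIcc_of_le hr.1]; exact Icc_subset_Icc le_rfl hr.2
    exact ((hFg z hz).mono hsub).intervalIntegrable
  set ψ : ℝ → ℂ := fun u => F (φ s u z1) - F (φ s u z2) with hψdef
  have hψc : ContinuousOn ψ (Icc s t) := (hFg z1 hz1).sub (hFg z2 hz2)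
  have hDeq : ∀ r ∈ Icc s t,
      φ s r z1 - φ s r z2 = (z1 - z2) + ∫ u in s..r, ψ u := by
    intro r hr
    rw [hφeq z1 hz1 s hs r hr.1, hφeq z2 hz2 s hs r hr.1,
      intervalIntegral.integral_sub (hint z1 hz1 r hr) (hint z2 hz2 r hr)]
    ring
  obtain ⟨hPr, hPl⟩ := stmt7_primitive hψc
  constructor
  · intro x hx
    have h1 : HasDerivWithinAt (fun r => (z1 - z2) + ∫ u in s..r, ψ u) (ψ x) (Ici x) x :=
      (hPr x hx).const_add (z1 - z2)
    refine h1.congr_of_eventuallyEq ?_ (hDeq x ⟨hx.1, hx.2.le⟩)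
    exact eventually_of_mem (Icc_mem_nhdsGE_of_mem hx) (fun y hy => hDeq y hy)
  · intro x hx
    have h1 : HasDerivWithinAt (fun r => (z1 - z2) + ∫ u in s..r, ψ u) (ψ x) (Iic x) x :=
      (hPl x hx).const_add (z1 - z2)
    refine h1.congr_of_eventuallyEq ?_ (hDeq x ⟨hx.1.le, hx.2⟩)
    exact eventually_of_mem (Icc_mem_nhdsLE_of_mem hx) (fun y hy => hDeq y hy)

private lemma stmt7_inj (F : ℂ → ℂ)
    (hF : DifferentiableOn ℂ F {w : ℂ | 0 < w.im})
    (U : ℝ → ℝ) (φ : ℝ → ℝ → ℂ → ℂ)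
    (hφmem : ∀ z ∈ {w : ℂ | 0 < w.im}, ∀ s, 0 ≤ s → ∀ t, s ≤ t → 0 < (φ s t z).im)
    (hφcont : ∀ z ∈ {w : ℂ | 0 < w.im}, ∀ s, 0 ≤ s → ContinuousOn (fun t => φ s t z) (Ici s))
    (hφeq : ∀ z ∈ {w : ℂ | 0 < w.im}, ∀ s, 0 ≤ s → ∀ t, s ≤ t →
      φ s t z = z + (∫ r in s..t, F (φ s r z)) + (((U t - U s : ℝ)) : ℂ))
    {s t : ℝ} (hs : 0 ≤ s) (hst : s ≤ t) :
    InjOn (φ s t) {w : ℂ | 0 < w.im} := by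
  intro z1 hz1 z2 hz2 heq
  have hg : ∀ z ∈ {w : ℂ | 0 < w.im}, ContinuousOn (fun r => φ s r z) (Icc s t) :=
    fun z hz => (hφcont z hz s hs).mono Icc_subset_Ici_self
  set C : Set ℂ := ((fun r => φ s r z1) '' Icc s t) ∪ ((fun r => φ s r z2) '' Icc s t) with hCdef
  have hCc : IsCompact C :=
    (isCompact_Icc.image_of_continuousOn (hg z1 hz1)).union
      (isCompact_Icc.image_of_continuousOn (hg z2 hz2))
  have hCH : C ⊆ {w : ℂ | 0 < w.im} := by
    rintro w (⟨r, hr, rfl⟩ | ⟨r, hr, rfl⟩)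
    · exact hφmem z1 hz1 s hs r hr.1
    · exact hφmem z2 hz2 s hs r hr.1
  obtain ⟨δ, δpos, K, hK1, hlipb, hquad, hdb, hlipC⟩ := stmt7_lipschitz_data F hF hCc hCH
  obtain ⟨hDr, hDl⟩ := stmt7_Dderiv F hF U φ hφmem hφcont hφeq hs hst hz1 hz2
  have hDc : ContinuousOn (fun r => φ s r z1 - φ s r z2) (Icc s t) :=
    (hg z1 hz1).sub (hg z2 hz2)
  have hσ : ∀ r ∈ Icc s t, s + t - r ∈ Icc s t := by
    intro r hr
    exact ⟨by linarith [hr.2], by linarith [hr.1]⟩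
  have hEc : ContinuousOn (fun r => φ s (s + t - r) z1 - φ s (s + t - r) z2) (Icc s t) := by
    exact hDc.comp ((continuous_const.sub continuous_id).continuousOn) hσ
  have hEd : ∀ x ∈ Ico s t, HasDerivWithinAt
      (fun r => φ s (s + t - r) z1 - φ s (s + t - r) z2)
      (-(F (φ s (s + t - x) z1) - F (φ s (s + t - x) z2))) (Ici x) x := by
    intro x hx
    have h1 := hDl (s + t - x) ⟨by linarith [hx.2], by linarith [hx.1]⟩
    have h2 : HasDerivWithinAt (fun r : ℝ => s + t - r) (-1) (Ici x) x :=
      ((hasDerivAt_id x).const_sub (s + t)).hasDerivWithinAt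
    have h3 : MapsTo (fun r : ℝ => s + t - r) (Ici x) (Iic (s + t - x)) := by
      intro r hr
      simp only [mem_Ici] at hr
      simp only [mem_Iic]
      linarith
    have := h1.scomp x h2 h3
    simpa [Function.comp_def] using this
  have hbound : ∀ x ∈ Ico s t,
      ‖-(F (φ s (s + t - x) z1) - F (φ s (s + t - x) z2))‖ ≤
        K * ‖φ s (s + t - x) z1 - φ s (s + t - x) z2‖ + 0 := by
    intro x hx
    have hx' : s + t - x ∈ Icc s t := ⟨by linarith [hx.2], by linarith [hx.1]⟩
    have h1 : φ s (s + t - x) z1 ∈ C := Or.inl ⟨_, hx', rfl⟩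
    have h2 : φ s (s + t - x) z2 ∈ C := Or.inr ⟨_, hx', rfl⟩
    rw [norm_neg, add_zero]
    exact hlipC _ h1 _ h2
  have hE0 : ‖φ s (s + t - s) z1 - φ s (s + t - s) z2‖ ≤ 0 := by
    rw [show s + t - s = t by ring, heq, sub_self, norm_zero]
  have gron := norm_le_gronwallBound_of_norm_deriv_right_le hEc hEd hE0 hbound t ⟨hst, le_rfl⟩
  rw [gronwallBound_ε0_δ0] at gron
  have h5 : s + t - t = s := by ring
  rw [h5] at gron
  rw [stmt7_init F U φ hφeq hz1 hs, stmt7_init F U φ hφeq hz2 hs] at gron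
  have : z1 - z2 = 0 := by
    have := norm_le_zero_iff.1 gron
    exact this
  exact sub_eq_zero.1 this

private lemma stmt7_diff (F : ℂ → ℂ)
    (hF : DifferentiableOn ℂ F {w : ℂ | 0 < w.im})
    (U : ℝ → ℝ) (φ : ℝ → ℝ → ℂ → ℂ)
    (hφmem : ∀ z ∈ {w : ℂ | 0 < w.im}, ∀ s, 0 ≤ s → ∀ t, s ≤ t → 0 < (φ s t z).im)
    (hφcont : ∀ z ∈ {w : ℂ | 0 < w.im}, ∀ s, 0 ≤ s → ContinuousOn (fun t => φ s t z) (Ici s))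
    (hφeq : ∀ z ∈ {w : ℂ | 0 < w.im}, ∀ s, 0 ≤ s → ∀ t, s ≤ t →
      φ s t z = z + (∫ r in s..t, F (φ s r z)) + (((U t - U s : ℝ)) : ℂ))
    {s t : ℝ} (hs : 0 ≤ s) (hst : s ≤ t)
    {z0 : ℂ} (hz0 : z0 ∈ {w : ℂ | 0 < w.im}) :
    DifferentiableAt ℂ (φ s t) z0 := by
  have hH : IsOpen {w : ℂ | 0 < w.im} := stmt7_isOpenH
  have hg : ∀ z ∈ {w : ℂ | 0 < w.im}, ContinuousOn (fun r => φ s r z) (Icc s t) :=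
    fun z hz => (hφcont z hz s hs).mono Icc_subset_Ici_self
  set C : Set ℂ := (fun r => φ s r z0) '' Icc s t with hCdef
  have hCc : IsCompact C := isCompact_Icc.image_of_continuousOn (hg z0 hz0)
  have hCH : C ⊆ {w : ℂ | 0 < w.im} := by
    rintro w ⟨r, hr, rfl⟩
    exact hφmem z0 hz0 s hs r hr.1
  obtain ⟨δ, δpos, K, hK1, hlipb, hquad, hdb, _⟩ := stmt7_lipschitz_data F hF hCc hCH
  have hK0 : (0 : ℝ) ≤ K := by linarith
  set e := Real.exp (K * (t - s)) with he
  have hepos : 0 < e := Real.exp_pos _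
  have he1 : 1 ≤ e := Real.one_le_exp (by nlinarith)
  have hz0im : 0 < z0.im := hz0
  set ρ := min (δ / 2 * Real.exp (-(K * (t - s)))) (z0.im / 2) with hρdef
  have hρpos : 0 < ρ := lt_min (by positivity) (by positivity)
  have hρδ : ρ * e ≤ δ / 2 := by
    calc ρ * e ≤ δ / 2 * Real.exp (-(K * (t - s))) * e :=
          mul_le_mul_of_nonneg_right (min_le_left _ _) hepos.le
      _ = δ / 2 := by
          rw [he, mul_assoc, ← Real.exp_add]
          simp
  have hmemz : ∀ z : ℂ, ‖z - z0‖ ≤ ρ → z ∈ {w : ℂ | 0 < w.im} := by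
    intro z hz
    have h1 : |(z - z0).im| ≤ ‖z - z0‖ := by
      exact Complex.abs_im_le_norm _
    have h2 : z.im - z0.im = (z - z0).im := by simp [Complex.sub_im]
    have h3 : ρ ≤ z0.im / 2 := min_le_right _ _
    have h4 := abs_le.1 (h1.trans hz)
    show 0 < z.im
    linarith [h4.1]
  -- a priori estimate
  have apriori : ∀ z : ℂ, ‖z - z0‖ ≤ ρ → ∀ r ∈ Icc s t,
      ‖φ s r z - φ s r z0‖ ≤ ‖z - z0‖ * e := by
    intro z hzρ
    have hzH : z ∈ {w : ℂ | 0 < w.im} := hmemz z hzρ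
    obtain ⟨hDr, _⟩ := stmt7_Dderiv F hF U φ hφmem hφcont hφeq hs hst hzH hz0
    have hDc : ContinuousOn (fun r => φ s r z - φ s r z0) (Icc s t) :=
      (hg z hzH).sub (hg z0 hz0)
    have hDs : φ s s z - φ s s z0 = z - z0 := by
      rw [stmt7_init F U φ hφeq hzH hs, stmt7_init F U φ hφeq hz0 hs]
    -- first, bound by δ
    have key : ∀ r ∈ Icc s t, ‖φ s r z - φ s r z0‖ ≤ δ := by
      by_contra hcon
      push_neg at hcon
      obtain ⟨r0, hr0, hr0'⟩ := hcon
      set S : Set ℝ := Icc s t ∩ (fun r => ‖φ s r z - φ s r z0‖) ⁻¹' Ici δ with hSdef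
      have hSne : S.Nonempty := ⟨r0, hr0, hr0'.le⟩
      have hSc : IsClosed S :=
        (continuous_norm.comp_continuousOn hDc).preimage_isClosed_of_isClosed
          isClosed_Icc isClosed_Ici
      have hSb : BddBelow S := ⟨s, fun r hr => hr.1.1⟩
      set r1 := sInf S with hr1def
      have hr1S : r1 ∈ S := hSc.csInf_mem hSne hSb
      have hr1I : r1 ∈ Icc s t := hr1S.1
      have hpre : ∀ u ∈ Ico s r1, ‖φ s u z - φ s u z0‖ ≤ δ := by
        intro u hu
        by_contra hu'
        have huS : u ∈ S := ⟨⟨hu.1, hu.2.le.trans hr1I.2⟩, le_of_not_ge hu'⟩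
        exact absurd (csInf_le hSb huS) (not_le.2 hu.2)
      have hb : ∀ x ∈ Ico s r1, ‖F (φ s x z) - F (φ s x z0)‖ ≤
          K * ‖φ s x z - φ s x z0‖ + 0 := by
        intro x hx
        have hxI : x ∈ Icc s t := ⟨hx.1, hx.2.le.trans hr1I.2⟩
        have ha : φ s x z0 ∈ C := ⟨x, hxI, rfl⟩
        have hbm : φ s x z ∈ closedBall (φ s x z0) δ := by
          rw [mem_closedBall, dist_eq_norm]
          exact hpre x hx
        rw [add_zero]
        exact hlipb _ ha _ hbm _ (mem_closedBall_self δpos.le)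
      have gron := norm_le_gronwallBound_of_norm_deriv_right_le
        (hDc.mono (Icc_subset_Icc le_rfl hr1I.2))
        (fun x hx => hDr x ⟨hx.1, hx.2.trans_le hr1I.2⟩)
        (by rw [hDs]) hb r1 ⟨hr1I.1, le_rfl⟩
      rw [gronwallBound_ε0] at gron
      have h2 : ρ * Real.exp (K * (r1 - s)) ≤ ρ * e :=
        mul_le_mul_of_nonneg_left (Real.exp_le_exp.2 (by nlinarith [hr1I.2])) hρpos.le
      have h3 : δ ≤ ‖φ s r1 z - φ s r1 z0‖ := hr1S.2
      have h4 : ‖z - z0‖ * Real.exp (K * (r1 - s)) ≤ ρ * Real.exp (K * (r1 - s)) :=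
        mul_le_mul_of_nonneg_right hzρ (Real.exp_pos _).le
      linarith
    -- second, the exponential bound
    have hb2 : ∀ x ∈ Ico s t, ‖F (φ s x z) - F (φ s x z0)‖ ≤
        K * ‖φ s x z - φ s x z0‖ + 0 := by
      intro x hx
      have hxI : x ∈ Icc s t := ⟨hx.1, hx.2.le⟩
      have ha : φ s x z0 ∈ C := ⟨x, hxI, rfl⟩
      have hbm : φ s x z ∈ closedBall (φ s x z0) δ := by
        rw [mem_closedBall, dist_eq_norm]
        exact key x hxI
      rw [add_zero]
      exact hlipb _ ha _ hbm _ (mem_closedBall_self δpos.le)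
    intro r hr
    have gron := norm_le_gronwallBound_of_norm_deriv_right_le hDc hDr
      (by rw [hDs]) hb2 r hr
    rw [gronwallBound_ε0] at gron
    refine gron.trans ?_
    exact mul_le_mul_of_nonneg_left (Real.exp_le_exp.2 (by nlinarith [hr.2])) (norm_nonneg _)
  -- the exponential of the integral of deriv F along the trajectory
  have hA : AnalyticOnNhd ℂ F {w : ℂ | 0 < w.im} := hF.analyticOnNhd hH
  set q : ℝ → ℂ := fun u => deriv F (φ s u z0) with hqdef
  have hqc : ContinuousOn q (Icc s t) :=
    hA.deriv.continuousOn.comp (hg z0 hz0) (fun r hr => hφmem z0 hz0 s hs r hr.1)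
  obtain ⟨hIr, _⟩ := stmt7_primitive hqc
  have hIc : ContinuousOn (fun r => ∫ u in s..r, q u) (Icc s t) := by
    have hqint : IntegrableOn q (uIcc s t) volume := by
      rw [uIcc_of_le hst]
      exact hqc.integrableOn_compact isCompact_Icc
    have := intervalIntegral.continuousOn_primitive_interval hqint
    rwa [uIcc_of_le hst] at this
  set E0 : ℝ → ℂ := fun r => Complex.exp (∫ u in s..r, q u) with hE0def
  have hE0c : ContinuousOn E0 (Icc s t) := Complex.continuous_exp.comp_continuousOn hIc
  have hE0d : ∀ x ∈ Ico s t, HasDerivWithinAt E0 (q x * E0 x) (Ici x) x := by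
    intro x hx
    have := (hIr x hx).cexp
    simpa [hE0def, mul_comm] using this
  have hE0s : E0 s = 1 := by
    simp [hE0def, intervalIntegral.integral_same]
  -- key quadratic estimate
  set CC := e ^ 2 * (e - 1) with hCCdef
  have hCC0 : 0 ≤ CC := by nlinarith
  have keyest : ∀ z : ℂ, ‖z - z0‖ ≤ ρ →
      ‖φ s t z - φ s t z0 - (z - z0) * E0 t‖ ≤ CC * ‖z - z0‖ ^ 2 := by
    intro z hzρ
    have hzH : z ∈ {w : ℂ | 0 < w.im} := hmemz z hzρ
    obtain ⟨hDr, _⟩ := stmt7_Dderiv F hF U φ hφmem hφcont hφeq hs hst hzH hz0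
    have hap := apriori z hzρ
    have hRc : ContinuousOn (fun r => (φ s r z - φ s r z0) - (z - z0) * E0 r) (Icc s t) :=
      (((hg z hzH).sub (hg z0 hz0)).sub (continuousOn_const.mul hE0c))
    have hRd : ∀ x ∈ Ico s t, HasDerivWithinAt
        (fun r => (φ s r z - φ s r z0) - (z - z0) * E0 r)
        ((F (φ s x z) - F (φ s x z0)) - (z - z0) * (q x * E0 x)) (Ici x) x := by
      intro x hx
      exact (hDr x hx).sub ((hE0d x hx).const_mul (z - z0))
    set ε := K * (‖z - z0‖ * e) ^ 2 with hεdef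
    have hRb : ∀ x ∈ Ico s t,
        ‖(F (φ s x z) - F (φ s x z0)) - (z - z0) * (q x * E0 x)‖ ≤
          K * ‖(φ s x z - φ s x z0) - (z - z0) * E0 x‖ + ε := by
      intro x hx
      have hxI : x ∈ Icc s t := ⟨hx.1, hx.2.le⟩
      have ha : φ s x z0 ∈ C := ⟨x, hxI, rfl⟩
      have hDbd : ‖φ s x z - φ s x z0‖ ≤ ‖z - z0‖ * e := hap x hxI
      have hDδ : ‖φ s x z - φ s x z0‖ ≤ δ := by
        refine hDbd.trans ?_
        have h1 : ‖z - z0‖ * e ≤ ρ * e := mul_le_mul_of_nonneg_right hzρ hepos.le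
        linarith
      have hbm : φ s x z ∈ closedBall (φ s x z0) δ := by
        rw [mem_closedBall, dist_eq_norm]
        exact hDδ
      have hsplit : (F (φ s x z) - F (φ s x z0)) - (z - z0) * (q x * E0 x)
          = (F (φ s x z) - F (φ s x z0) - deriv F (φ s x z0) * (φ s x z - φ s x z0))
            + deriv F (φ s x z0) * ((φ s x z - φ s x z0) - (z - z0) * E0 x) := by
        simp only [hqdef]
        ring
      rw [hsplit]
      have h1 := hquad _ ha _ hbm
      have h2 : ‖deriv F (φ s x z0) * ((φ s x z - φ s x z0) - (z - z0) * E0 x)‖ ≤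
          K * ‖(φ s x z - φ s x z0) - (z - z0) * E0 x‖ := by
        rw [norm_mul]
        exact mul_le_mul_of_nonneg_right (hdb _ ha) (norm_nonneg _)
      have h3 : ‖φ s x z - φ s x z0‖ ^ 2 ≤ (‖z - z0‖ * e) ^ 2 := by
        nlinarith [norm_nonneg (φ s x z - φ s x z0)]
      calc ‖_ + _‖ ≤ _ + _ := norm_add_le _ _
        _ ≤ K * ‖φ s x z - φ s x z0‖ ^ 2
            + K * ‖(φ s x z - φ s x z0) - (z - z0) * E0 x‖ := add_le_add h1 h2
        _ ≤ K * ‖(φ s x z - φ s x z0) - (z - z0) * E0 x‖ + ε := by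
            have := mul_le_mul_of_nonneg_left h3 hK0
            rw [hεdef]
            linarith
    have hRs : ‖(φ s s z - φ s s z0) - (z - z0) * E0 s‖ ≤ 0 := by
      rw [stmt7_init F U φ hφeq hzH hs, stmt7_init F U φ hφeq hz0 hs, hE0s]
      simp
    have gron := norm_le_gronwallBound_of_norm_deriv_right_le hRc hRd hRs hRb t ⟨hst, le_rfl⟩
    have hKne : K ≠ 0 := by linarith
    rw [gronwallBound_of_K_ne_0 hKne] at gron
    refine gron.trans ?_
    show (0:ℝ) * Real.exp (K * (t - s)) + K * (‖z - z0‖ * e) ^ 2 / K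
        * (Real.exp (K * (t - s)) - 1) ≤ CC * ‖z - z0‖ ^ 2
    rw [← he, hCCdef]
    have hq : K * (‖z - z0‖ * e) ^ 2 / K = (‖z - z0‖ * e) ^ 2 := by
      field_simp
    rw [hq]
    have : (0:ℝ) * e + (‖z - z0‖ * e) ^ 2 * (e - 1) = e ^ 2 * (e - 1) * ‖z - z0‖ ^ 2 := by
      ring
    linarith
  -- conclude
  have hder : HasDerivAt (φ s t) (E0 t) z0 := by
    rw [hasDerivAt_iff_isLittleO, Asymptotics.isLittleO_iff]
    intro c hc
    have hrad : 0 < min ρ (c / (CC + 1)) := lt_min hρpos (by positivity)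
    filter_upwards [Metric.closedBall_mem_nhds z0 hrad] with z hz
    rw [mem_closedBall, dist_eq_norm] at hz
    have h1 : ‖z - z0‖ ≤ ρ := hz.trans (min_le_left _ _)
    have h2 : ‖z - z0‖ ≤ c / (CC + 1) := hz.trans (min_le_right _ _)
    have h3 := keyest z h1
    rw [smul_eq_mul]
    refine h3.trans ?_
    have h4 : (CC + 1) * ‖z - z0‖ ≤ c := by
      rw [← le_div_iff₀' (by positivity)]
      exact h2
    nlinarith [norm_nonneg (z - z0)]
  exact hder.differentiableAt

/-- Let `F : ℍ → ℍ` be holomorphic and `U` continuous, and suppose the flow `φ s t ·` of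
`dZ = F(Z) dt + dU` is globally defined on `ℍ` for `0 ≤ s ≤ t`. Then for each fixed `(s,t)`,
the map `z ↦ φ s t z` is an injective holomorphic function from `ℍ` to `ℍ`. -/
theorem stmt7 (F : ℂ → ℂ)
    (hF : DifferentiableOn ℂ F {w : ℂ | 0 < w.im})
    (hmap : MapsTo F {w : ℂ | 0 < w.im} {w : ℂ | 0 < w.im})
    (U : ℝ → ℝ) (hU : Continuous U)
    (φ : ℝ → ℝ → ℂ → ℂ)
    (hφmem : ∀ z ∈ {w : ℂ | 0 < w.im}, ∀ s, 0 ≤ s → ∀ t, s ≤ t → 0 < (φ s t z).im)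
    (hφcont : ∀ z ∈ {w : ℂ | 0 < w.im}, ∀ s, 0 ≤ s → ContinuousOn (fun t => φ s t z) (Ici s))
    (hφeq : ∀ z ∈ {w : ℂ | 0 < w.im}, ∀ s, 0 ≤ s → ∀ t, s ≤ t →
      φ s t z = z + (∫ r in s..t, F (φ s r z)) + (((U t - U s : ℝ)) : ℂ)) :
    ∀ s t : ℝ, 0 ≤ s → s ≤ t →
      InjOn (φ s t) {w : ℂ | 0 < w.im} ∧
      DifferentiableOn ℂ (φ s t) {w : ℂ | 0 < w.im} ∧
      MapsTo (φ s t) {w : ℂ | 0 < w.im} {w : ℂ | 0 < w.im} := by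
  intro s t hs hst
  refine ⟨stmt7_inj F hF U φ hφmem hφcont hφeq hs hst, ?_,
    fun z hz => hφmem z hz s hs t hst⟩
  intro z0 hz0
  exact (stmt7_diff F hF U φ hφmem hφcont hφeq hs hst hz0).differentiableWithinAt
end

section
/- For α ∈ (0,1), F(z) = z^α, and 0 ≤ s ≤ t, the function φ(s,t,z) = ((1−α)(t−s) + z^{1−α})^{1/(1−α)} solves the ODE ∂_t φ(s,t,z) = F(φ(s,t,z)) with φ(s,s,z) = z, for every z in the upper half-plane ℍ. -/
open Complex Real Set

/-- The explicit flow `φ s t z = ((1−α)(t−s) + z^(1−α))^(1/(1−α))` of `dZ = Z^α dt`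
(principal branch powers). -/
noncomputable def phiFlow (α s t : ℝ) (z : ℂ) : ℂ :=
  ((((1 - α) * (t - s) : ℝ) : ℂ) + z ^ (((1 - α : ℝ)) : ℂ)) ^ ((((1 - α)⁻¹ : ℝ)) : ℂ)

lemma arg_pos_of_im_pos {u : ℂ} (hu : 0 < u.im) : 0 < u.arg := by
  rcases (Complex.arg_nonneg_iff.2 hu.le).lt_or_eq with h' | h'
  · exact h'
  · exact absurd (Complex.arg_eq_zero_iff.mp h'.symm).2 hu.ne'

lemma arg_lt_pi_of_im_pos {u : ℂ} (hu : 0 < u.im) : u.arg < π := by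
  rcases (Complex.arg_le_pi u).lt_or_eq with h' | h'
  · exact h'
  · exact absurd (Complex.arg_eq_pi_iff.mp h').2 hu.ne'

/-- In the open upper half plane, bigger `re/im` ratio means smaller argument. -/
lemma arg_le_arg_of_im_pos {u v : ℂ} (hu : 0 < u.im) (hv : 0 < v.im)
    (h : v.re / v.im ≤ u.re / u.im) : u.arg ≤ v.arg := by
  have hu0 : u ≠ 0 := fun h0 => by simp [h0] at hu
  have hv0 : v ≠ 0 := fun h0 => by simp [h0] at hv
  have hargu : 0 < u.arg := arg_pos_of_im_pos hu
  have hargv : 0 < v.arg := arg_pos_of_im_pos hv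
  have hargu' : u.arg < π := arg_lt_pi_of_im_pos hu
  have hargv' : v.arg < π := arg_lt_pi_of_im_pos hv
  have key : ∀ w : ℂ, w ≠ 0 → 0 < w.im →
      Real.tan (π / 2 - w.arg) = w.re / w.im := by
    intro w hw0 hwim
    have hsin : Real.sin w.arg = w.im / ‖w‖ := Complex.sin_arg w
    have hcos : Real.cos w.arg = w.re / ‖w‖ := Complex.cos_arg hw0
    have habs : (0:ℝ) < ‖w‖ := norm_pos_iff.mpr hw0
    rw [Real.tan_eq_sin_div_cos, Real.sin_pi_div_two_sub, Real.cos_pi_div_two_sub,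
      hsin, hcos]
    field_simp
  have hmono := Real.strictMonoOn_tan
  have hu' : π / 2 - u.arg ∈ Ioo (-(π/2)) (π/2) := ⟨by linarith, by linarith⟩
  have hv' : π / 2 - v.arg ∈ Ioo (-(π/2)) (π/2) := ⟨by linarith, by linarith⟩
  have hle : π / 2 - v.arg ≤ π / 2 - u.arg := by
    by_contra hcon
    push_neg at hcon
    have := hmono hu' hv' hcon
    rw [key u hu0 hu, key v hv0 hv] at this
    exact absurd this (not_lt.2 h)
  linarith

/-- For `α ∈ (0,1)` and `F z = z^α`, the function
`φ s t z = ((1−α)(t−s) + z^(1−α))^(1/(1−α))` satisfies `φ s s z = z` and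
`∂ₜ φ s t z = (φ s t z)^α` for `t ≥ s` and every `z` in the upper half-plane. -/
theorem stmt10 (α : ℝ) (hα0 : 0 < α) (hα1 : α < 1)
    (s : ℝ) (z : ℂ) (hz : 0 < z.im) :
    phiFlow α s s z = z ∧
    ∀ t : ℝ, s ≤ t →
      HasDerivAt (fun τ : ℝ => phiFlow α s τ z) ((phiFlow α s t z) ^ ((α : ℝ) : ℂ)) t := by
  have hβ0 : 0 < 1 - α := by linarith
  set β : ℝ := 1 - α with hβdef
  have hβ1 : β < 1 := by simp [hβdef]; linarith
  have hz0 : z ≠ 0 := fun h0 => by simp [h0] at hz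
  have hθ0 : 0 < z.arg := arg_pos_of_im_pos hz
  have hθπ : z.arg < π := arg_lt_pi_of_im_pos hz
  have hβθ0 : 0 < β * z.arg := mul_pos hβ0 hθ0
  have hβθπ : β * z.arg < π := by nlinarith [Real.pi_pos]
  set v : ℂ := z ^ ((β : ℝ) : ℂ) with hvdef
  have himlz : (Complex.log z * ((β:ℝ):ℂ)).im = β * z.arg := by
    simp [Complex.mul_im, Complex.log_im]; ring
  have hv : v = Complex.exp (Complex.log z * ((β:ℝ):ℂ)) :=
    Complex.cpow_def_of_ne_zero hz0 _
  have hv0 : v ≠ 0 := by rw [hv]; exact Complex.exp_ne_zero _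
  have hlogv : Complex.log v = Complex.log z * ((β:ℝ):ℂ) := by
    rw [hv, Complex.log_exp] <;> rw [himlz] <;> linarith
  have hargv : v.arg = β * z.arg := by
    rw [← Complex.log_im, hlogv, himlz]
  have hvim : 0 < v.im := by
    have h1 := Complex.norm_mul_sin_arg v
    have h2 : 0 < Real.sin v.arg := by
      rw [hargv]; exact Real.sin_pos_of_pos_of_lt_pi hβθ0 (by linarith)
    have h3 : 0 < ‖v‖ := norm_pos_iff.mpr hv0
    nlinarith
  constructor
  · show ((((β * (s - s) : ℝ)) : ℂ) + v) ^ (((β⁻¹ : ℝ)) : ℂ) = z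
    have h1 : ((β * (s - s) : ℝ) : ℂ) = 0 := by norm_num
    rw [h1, zero_add, hvdef, ← Complex.cpow_mul]
    · have : ((β:ℝ):ℂ) * ((β⁻¹:ℝ):ℂ) = 1 := by
        rw [← Complex.ofReal_mul, mul_inv_cancel₀ (ne_of_gt hβ0)]; simp
      rw [this, Complex.cpow_one]
    · rw [himlz]; linarith
    · rw [himlz]; linarith
  · intro t ht
    set w : ℂ := ((β * (t - s) : ℝ) : ℂ) + v with hwdef
    have hwim : w.im = v.im := by simp [hwdef]
    have hwim0 : 0 < w.im := by rw [hwim]; exact hvim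
    have hw0 : w ≠ 0 := fun h0 => by rw [h0] at hwim0; simp at hwim0
    have hwre : w.re = β * (t - s) + v.re := by simp [hwdef]
    have hargw : w.arg ≤ v.arg := by
      apply arg_le_arg_of_im_pos hwim0 hvim
      rw [hwre, hwim]
      have : 0 ≤ β * (t - s) := mul_nonneg hβ0.le (by linarith)
      gcongr
      linarith
    have hargw0 : 0 < w.arg := arg_pos_of_im_pos hwim0
    have himlw : (Complex.log w * ((β⁻¹:ℝ):ℂ)).im = β⁻¹ * w.arg := by
      simp [Complex.mul_im, Complex.log_im]; ring
    have hwargle : β⁻¹ * w.arg ≤ z.arg := by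
      have : β⁻¹ * w.arg ≤ β⁻¹ * (β * z.arg) := by
        apply mul_le_mul_of_nonneg_left (le_trans hargw (le_of_eq hargv))
        positivity
      rwa [← mul_assoc, inv_mul_cancel₀ (ne_of_gt hβ0), one_mul] at this
    -- derivative of the inside
    have hd1 : HasDerivAt (fun τ : ℝ => β * (τ - s)) β t := by
      simpa using ((hasDerivAt_id t).sub_const s).const_mul β
    have hd2 : HasDerivAt (fun τ : ℝ => ((β * (τ - s) : ℝ) : ℂ)) ((β:ℝ):ℂ) t :=
      hd1.ofReal_comp
    have hd3 : HasDerivAt (fun τ : ℝ => ((β * (τ - s) : ℝ) : ℂ) + v) ((β:ℝ):ℂ) t :=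
      hd2.add_const v
    have hslit : w ∈ Complex.slitPlane := Complex.mem_slitPlane_iff.2 (Or.inr (ne_of_gt hwim0))
    have hd4 := (Complex.hasStrictDerivAt_cpow_const (c := ((β⁻¹:ℝ):ℂ)) hslit).hasDerivAt.comp t hd3
    have heq : (fun τ : ℝ => phiFlow α s τ z) =
        (fun y : ℂ => y ^ (((β⁻¹:ℝ)):ℂ)) ∘ (fun τ : ℝ => ((β * (τ - s) : ℝ) : ℂ) + v) := rfl
    rw [heq]
    convert hd4 using 1
    show (w ^ (((β⁻¹ : ℝ)) : ℂ)) ^ ((α:ℝ):ℂ) = ((β⁻¹:ℝ):ℂ) * w ^ (((β⁻¹:ℝ):ℂ) - 1) * ((β:ℝ):ℂ)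
    have hcm : w ^ (((β⁻¹:ℝ):ℂ) * ((α:ℝ):ℂ)) = (w ^ (((β⁻¹:ℝ)):ℂ)) ^ ((α:ℝ):ℂ) := by
      apply Complex.cpow_mul
      · rw [himlw]; have := Real.pi_pos; nlinarith [mul_pos (inv_pos.2 hβ0) hargw0]
      · rw [himlw]; linarith
    rw [← hcm]
    have hexp : ((β⁻¹:ℝ):ℂ) * ((α:ℝ):ℂ) = ((β⁻¹:ℝ):ℂ) - 1 := by
      rw [← Complex.ofReal_mul, ← Complex.ofReal_one, ← Complex.ofReal_sub]
      congr 1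
      field_simp [hβdef]
      linarith
    rw [hexp]
    have hββ : ((β⁻¹:ℝ):ℂ) * ((β:ℝ):ℂ) = 1 := by
      rw [← Complex.ofReal_mul, inv_mul_cancel₀ (ne_of_gt hβ0)]; simp
    calc w ^ (((β⁻¹:ℝ):ℂ) - 1) = w ^ (((β⁻¹:ℝ):ℂ) - 1) * (((β⁻¹:ℝ):ℂ) * ((β:ℝ):ℂ)) := by
          rw [hββ, mul_one]
      _ = ((β⁻¹:ℝ):ℂ) * w ^ (((β⁻¹:ℝ):ℂ) - 1) * ((β:ℝ):ℂ) := by ring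
    rfl
end
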